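/- arXiv:1210.6475 — 8 statements merged into one kernel-verified Lean document; each statement's English description precedes it below -/
import Mathlib

section
/- Let V : ℝ → ℝ be Lebesgue integrable, let x₀ and x be real numbers with x ≠ x₀, and for y in the closed interval with endpoints x and x₀ set F(y) = |∫_y^{x₀} |V(t)| dt|. Let n ∈ ℕ and let f be a continuous complex-valued function on the closed interval with endpoints x and x₀ such that |f(y)| ≤ F(y)ⁿ/n! for every y in that interval. Then |∫_x^{x₀} f(t)·V(t) dt| ≤ F(x)^{n+1}/(n+1)!. -/
open MeasureTheory intervalIntegral

/-- Key identity: if `g` is integrable and `G t = ∫ t..b g`, then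
`∫ a..b, G t ^ n * g t = G a ^ (n+1) / (n+1)` for `a ≤ b`. -/
lemma aux_pow_integral (g : ℝ → ℝ) (hg : Integrable g) (b : ℝ) :
    ∀ n : ℕ, ∀ a, a ≤ b →
      (∫ t in a..b, (∫ s in t..b, g s) ^ n * g t)
        = (∫ s in a..b, g s) ^ (n + 1) / ((n : ℝ) + 1) := by
  set G : ℝ → ℝ := fun t => ∫ s in t..b, g s with hGdef
  have hGc : Continuous G := by
    have h1 : Continuous fun t => ∫ s in b..t, g s := hg.continuous_primitive b
    have h2 : G = fun t => -∫ s in b..t, g s := by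
      funext t
      rw [hGdef]
      exact intervalIntegral.integral_symm b t
    rw [h2]
    exact h1.neg
  have hGbdd : ∀ t, |G t| ≤ ∫ s, |g s| := by
    intro t
    have h1 : ‖∫ s in t..b, g s‖ ≤ ∫ s in Set.uIoc t b, ‖g s‖ :=
      intervalIntegral.norm_integral_le_integral_norm_uIoc
    have h2 : ∫ s in Set.uIoc t b, ‖g s‖ ≤ ∫ s, ‖g s‖ :=
      setIntegral_le_integral hg.norm (Filter.Eventually.of_forall fun s => norm_nonneg _)
    simpa [Real.norm_eq_abs] using h1.trans h2
  intro n
  induction n with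
  | zero =>
    intro a hab
    simp
  | succ n ih =>
    intro a hab
    set M : ℝ := ∫ s, |g s| with hM
    set h : ℝ → ℝ := fun s => G s ^ n * g s with hh
    -- integrability facts
    have hGpowbdd : ∀ m : ℕ, ∃ C, ∀ x : ℝ, ‖G x ^ m‖ ≤ C := by
      intro m
      refine ⟨M ^ m, fun x => ?_⟩
      rw [norm_pow, Real.norm_eq_abs]
      exact pow_le_pow_left₀ (abs_nonneg _) (hGbdd x) m
    have hh_int : Integrable h (volume.restrict (Set.Ioc a b)) := by
      refine Integrable.bdd_mul hg.restrict ?_ (Filter.Eventually.of_forall (hGpowbdd n).choose_spec)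
      exact ((hGc.pow n).aestronglyMeasurable).restrict
    have hGh_int : Integrable (fun s => G s ^ (n + 1) * g s)
        (volume.restrict (Set.Ioc a b)) := by
      refine Integrable.bdd_mul hg.restrict ?_ (Filter.Eventually.of_forall (hGpowbdd (n + 1)).choose_spec)
      exact ((hGc.pow (n + 1)).aestronglyMeasurable).restrict
    have hg_int : Integrable g (volume.restrict (Set.Ioc a b)) := hg.restrict
    -- the two-variable kernel
    set K : ℝ → ℝ → ℝ := fun t s => if t ≤ s then g t * h s else 0 with hK
    have hK_int : Integrable (Function.uncurry K)
        ((volume.restrict (Set.Ioc a b)).prod (volume.restrict (Set.Ioc a b))) := by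
      have hprod : Integrable (fun z : ℝ × ℝ => g z.1 * h z.2)
          ((volume.restrict (Set.Ioc a b)).prod (volume.restrict (Set.Ioc a b))) :=
        hg_int.mul_prod hh_int
      refine Integrable.mono hprod ?_ ?_
      · have hKi : Function.uncurry K =
            Set.indicator {z : ℝ × ℝ | z.1 ≤ z.2} (fun z => g z.1 * h z.2) := by
          funext z
          simp only [Function.uncurry, hK, Set.indicator_apply, Set.mem_setOf_eq]
        rw [hKi]
        exact hprod.1.indicator (measurableSet_le measurable_fst measurable_snd)
      · refine Filter.Eventually.of_forall fun z => ?_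
        simp only [Function.uncurry, hK]
        split_ifs
        · exact le_refl _
        · simp only [norm_zero, Real.norm_eq_abs, abs_mul]
          positivity
    -- evaluate inner integrals
    have inner1 : ∀ t ∈ Set.Ioc a b,
        (∫ s in Set.Ioc a b, K t s) = g t * ∫ s in t..b, h s := by
      intro t ht
      have e1 : (fun s => K t s) = Set.indicator (Set.Ici t) (fun s => g t * h s) := by
        funext s
        simp only [hK, Set.indicator_apply, Set.mem_Ici]
      rw [e1, setIntegral_indicator measurableSet_Ici]
      have e2 : Set.Ioc a b ∩ Set.Ici t = Set.Icc t b := by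
        ext s
        simp only [Set.mem_inter_iff, Set.mem_Ioc, Set.mem_Ici, Set.mem_Icc]
        constructor
        · rintro ⟨⟨_, h2⟩, h3⟩; exact ⟨h3, h2⟩
        · rintro ⟨h1, h2⟩; exact ⟨⟨lt_of_lt_of_le ht.1 h1, h2⟩, h1⟩
      rw [e2, integral_Icc_eq_integral_Ioc, ← intervalIntegral.integral_of_le ht.2,
        intervalIntegral.integral_const_mul]
    have inner2 : ∀ s ∈ Set.Ioc a b,
        (∫ t in Set.Ioc a b, K t s) = (∫ t in Set.Ioc a s, g t) * h s := by
      intro s hs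
      have e1 : (fun t => K t s) = Set.indicator (Set.Iic s) (fun t => g t * h s) := by
        funext t
        simp only [hK, Set.indicator_apply, Set.mem_Iic]
      rw [e1, setIntegral_indicator measurableSet_Iic]
      have e2 : Set.Ioc a b ∩ Set.Iic s = Set.Ioc a s := by
        ext t
        simp only [Set.mem_inter_iff, Set.mem_Ioc, Set.mem_Iic]
        constructor
        · rintro ⟨⟨h1, _⟩, h3⟩; exact ⟨h1, h3⟩
        · rintro ⟨h1, h2⟩; exact ⟨⟨h1, h2.trans hs.2⟩, h2⟩
      rw [e2, MeasureTheory.integral_mul_const]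
    -- the swap
    have swap : (∫ t in Set.Ioc a b, ∫ s in Set.Ioc a b, K t s)
        = ∫ s in Set.Ioc a b, ∫ t in Set.Ioc a b, K t s :=
      MeasureTheory.integral_integral_swap hK_int
    -- split ∫ Ioc a s g = G a - G s
    have hsplit : ∀ s ∈ Set.Ioc a b, (∫ t in Set.Ioc a s, g t) = G a - G s := by
      intro s hs
      have hadd : (∫ t in a..s, g t) + (∫ t in s..b, g t) = ∫ t in a..b, g t :=
        intervalIntegral.integral_add_adjacent_intervals
          hg.intervalIntegrable hg.intervalIntegrable
      have : (∫ t in Set.Ioc a s, g t) = ∫ t in a..s, g t :=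
        (intervalIntegral.integral_of_le hs.1.le).symm
      rw [this]
      have hGa : G a = ∫ t in a..b, g t := rfl
      have hGs : G s = ∫ t in s..b, g t := rfl
      linarith
    -- main computation
    set I : ℝ := ∫ t in Set.Ioc a b, G t ^ (n + 1) * g t with hI
    have hJ : (∫ s in Set.Ioc a b, h s) = G a ^ (n + 1) / ((n : ℝ) + 1) := by
      rw [← intervalIntegral.integral_of_le hab]
      exact ih a hab
    have step1 : I = ((n : ℝ) + 1) * ∫ t in Set.Ioc a b, ∫ s in Set.Ioc a b, K t s := by
      rw [← MeasureTheory.integral_const_mul]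
      refine setIntegral_congr_fun measurableSet_Ioc fun t ht => ?_
      rw [inner1 t ht, ih t ht.2]
      have hn : ((n : ℝ) + 1) ≠ 0 := by positivity
      field_simp
      ring
    have step2 : (∫ s in Set.Ioc a b, ∫ t in Set.Ioc a b, K t s)
        = G a * (G a ^ (n + 1) / ((n : ℝ) + 1)) - I := by
      have e1 : (∫ s in Set.Ioc a b, ∫ t in Set.Ioc a b, K t s)
          = ∫ s in Set.Ioc a b, (G a * h s - G s * h s) := by
        refine setIntegral_congr_fun measurableSet_Ioc fun s hs => ?_
        rw [inner2 s hs, hsplit s hs]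
        ring
      have hGah : Integrable (fun s => G a * h s) (volume.restrict (Set.Ioc a b)) :=
        hh_int.const_mul _
      have hGsh : Integrable (fun s => G s * h s) (volume.restrict (Set.Ioc a b)) := by
        have : (fun s => G s * h s) = fun s => G s ^ (n + 1) * g s := by
          funext s; rw [hh]; ring
        rw [this]
        exact hGh_int
      rw [e1, MeasureTheory.integral_sub hGah hGsh, MeasureTheory.integral_const_mul, hJ]
      congr 1
      rw [hI]
      refine setIntegral_congr_fun measurableSet_Ioc fun s _ => ?_
      rw [hh]; ring
    have heq : I = ((n : ℝ) + 1) * (G a * (G a ^ (n + 1) / ((n : ℝ) + 1)) - I) := by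
      conv_lhs => rw [step1]
      rw [swap, step2]
    have hn : ((n : ℝ) + 1) ≠ 0 := by positivity
    have heq2 : ((n : ℝ) + 2) * I = G a ^ (n + 2) := by
      have e : ((n : ℝ) + 1) * (G a * (G a ^ (n + 1) / ((n : ℝ) + 1)) - I)
          = G a ^ (n + 2) - ((n : ℝ) + 1) * I := by
        field_simp
        ring
      rw [e] at heq
      linarith
    have hgoal : (∫ t in a..b, G t ^ (n + 1) * g t) = I := by
      rw [intervalIntegral.integral_of_le hab, hI]
    rw [hgoal]
    have hn2 : ((n : ℝ) + 2) ≠ 0 := by positivity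
    have : I = G a ^ (n + 2) / ((n : ℝ) + 2) := by
      field_simp
      linarith [heq2]
    rw [this]
    push_cast
    ring_nf
    have hGa' : G a = ∫ s in a..b, g s := rfl
    rw [hGa']
    ring

/-- Half of the main statement: the case `a ≤ b`. -/
lemma half_statement (V : ℝ → ℝ) (hV : Integrable V) (a b : ℝ) (hab : a ≤ b)
    (n : ℕ) (f : ℝ → ℂ) (hf : ContinuousOn f (Set.Icc a b))
    (hbound : ∀ y ∈ Set.Icc a b,
      ‖f y‖ ≤ (∫ t in y..b, |V t|) ^ n / n.factorial) :
    ‖∫ t in a..b, f t * (V t : ℂ)‖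
      ≤ (∫ t in a..b, |V t|) ^ (n + 1) / (n + 1).factorial := by
  set g : ℝ → ℝ := fun t => |V t| with hgdef
  have hg : Integrable g := hV.abs
  set G : ℝ → ℝ := fun t => ∫ s in t..b, g s with hGdef
  have hGc : Continuous G := by
    have h1 : Continuous fun t => ∫ s in b..t, g s := hg.continuous_primitive b
    have h2 : G = fun t => -∫ s in b..t, g s := by
      funext t
      rw [hGdef]
      exact intervalIntegral.integral_symm b t
    rw [h2]
    exact h1.neg
  have hfV : IntervalIntegrable (fun t => f t * (V t : ℂ)) volume a b := by
    refine IntervalIntegrable.continuousOn_mul hV.ofReal.intervalIntegrable ?_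
    rwa [Set.uIcc_of_le hab]
  have h1 : ‖∫ t in a..b, f t * (V t : ℂ)‖
      ≤ ∫ t in a..b, ‖f t * (V t : ℂ)‖ := by
    simpa using
      intervalIntegral.norm_integral_le_integral_norm
        (f := fun t => f t * (V t : ℂ)) (μ := volume) hab
  have hint2 : IntervalIntegrable (fun t => (G t ^ n / (n.factorial : ℝ)) * g t)
      volume a b := by
    refine IntervalIntegrable.continuousOn_mul hg.intervalIntegrable ?_
    exact ((hGc.pow n).div_const _).continuousOn
  have h2 : (∫ t in a..b, ‖f t * (V t : ℂ)‖)
      ≤ ∫ t in a..b, (G t ^ n / (n.factorial : ℝ)) * g t := by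
    refine intervalIntegral.integral_mono_on hab ?_ hint2 ?_
    · simpa using hfV.norm
    · intro t ht
      have : ‖f t * (V t : ℂ)‖ = ‖f t‖ * g t := by
        rw [norm_mul, Complex.norm_real, Real.norm_eq_abs]
      rw [this]
      exact mul_le_mul_of_nonneg_right (hbound t ht) (abs_nonneg _)
  have h3 : (∫ t in a..b, (G t ^ n / (n.factorial : ℝ)) * g t)
      = (1 / (n.factorial : ℝ)) * ∫ t in a..b, G t ^ n * g t := by
    rw [← intervalIntegral.integral_const_mul]
    refine intervalIntegral.integral_congr fun t _ => ?_
    ring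
  have h4 : (∫ t in a..b, G t ^ n * g t) = G a ^ (n + 1) / ((n : ℝ) + 1) :=
    aux_pow_integral g hg b n a hab
  have hfac : ((n + 1).factorial : ℝ) = ((n : ℝ) + 1) * (n.factorial : ℝ) := by
    rw [Nat.factorial_succ]
    push_cast
    ring
  have hfacpos : (0 : ℝ) < (n.factorial : ℝ) := by positivity
  have hGa : G a = ∫ t in a..b, |V t| := rfl
  calc ‖∫ t in a..b, f t * (V t : ℂ)‖
      ≤ ∫ t in a..b, ‖f t * (V t : ℂ)‖ := h1
    _ ≤ ∫ t in a..b, (G t ^ n / (n.factorial : ℝ)) * g t := h2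
    _ = (1 / (n.factorial : ℝ)) * (G a ^ (n + 1) / ((n : ℝ) + 1)) := by rw [h3, h4]
    _ = (∫ t in a..b, |V t|) ^ (n + 1) / ((n + 1).factorial : ℝ) := by
        rw [hfac, ← hGa, one_div, inv_mul_eq_div, div_div]

/-- If `V` is Lebesgue integrable, `x ≠ x₀`,
`F y = |∫_y^{x₀} |V t| dt|`, and `f` is continuous on the closed interval with
endpoints `x, x₀` with `|f y| ≤ F y ^ n / n!` there, then
`|∫_x^{x₀} f t * V t dt| ≤ F x ^ (n+1) / (n+1)!`. -/
theorem statement0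
    (V : ℝ → ℝ) (hV : Integrable V)
    (x₀ x : ℝ) (hx : x ≠ x₀)
    (F : ℝ → ℝ) (hF : ∀ y, F y = abs (∫ t in y..x₀, |V t|))
    (n : ℕ) (f : ℝ → ℂ)
    (hf : ContinuousOn f (Set.uIcc x x₀))
    (hbound : ∀ y ∈ Set.uIcc x x₀, ‖f y‖ ≤ F y ^ n / n.factorial) :
    ‖∫ t in x..x₀, f t * (V t : ℂ)‖ ≤ F x ^ (n + 1) / (n + 1).factorial := by
  rcases lt_or_gt_of_ne hx with hlt | hgt
  · -- case x < x₀
    have huIcc : Set.uIcc x x₀ = Set.Icc x x₀ := Set.uIcc_of_le hlt.le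
    have hFkey : ∀ y ∈ Set.Icc x x₀, F y = ∫ t in y..x₀, |V t| := by
      intro y hy
      rw [hF y, abs_of_nonneg]
      exact intervalIntegral.integral_nonneg hy.2 fun t _ => abs_nonneg _
    have hres := half_statement V hV x x₀ hlt.le n f (huIcc ▸ hf) ?_
    · rwa [hFkey x ⟨le_refl x, hlt.le⟩]
    · intro y hy
      rw [← hFkey y hy]
      exact hbound y (huIcc ▸ hy)
  · -- case x₀ < x : reflect
    have huIcc : Set.uIcc x x₀ = Set.Icc x₀ x := Set.uIcc_of_ge hgt.le
    set W : ℝ → ℝ := fun t => V (-t) with hWdef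
    have hW : Integrable W := by
      have hmp : MeasurePreserving (fun t : ℝ => -t) volume volume :=
        Measure.measurePreserving_neg volume
      have hemb : MeasurableEmbedding (fun t : ℝ => -t) :=
        (Homeomorph.neg ℝ).measurableEmbedding
      exact (hmp.integrable_comp_emb hemb).mpr hV
    set f' : ℝ → ℂ := fun t => f (-t) with hf'def
    have hab : -x ≤ -x₀ := neg_le_neg hgt.le
    have hmap : ∀ y ∈ Set.Icc (-x) (-x₀), -y ∈ Set.Icc x₀ x := by
      intro y hy
      exact ⟨le_neg_of_le_neg hy.2, neg_le_of_neg_le hy.1⟩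
    have hf' : ContinuousOn f' (Set.Icc (-x) (-x₀)) := by
      rw [hf'def]
      refine ContinuousOn.comp (huIcc ▸ hf) (continuous_neg.continuousOn) ?_
      intro y hy
      exact hmap y hy
    -- key: ∫ t in y..(-x₀), |W t| = ∫ t in x₀..(-y), |V t|
    have hWint : ∀ y : ℝ, (∫ t in y..(-x₀), |W t|) = ∫ t in x₀..(-y), |V t| := by
      intro y
      have := intervalIntegral.integral_comp_neg (a := y) (b := -x₀)
        (f := fun t => |V t|)
      simpa using this
    have hFkey : ∀ y ∈ Set.Icc x₀ x, F y = ∫ t in x₀..y, |V t| := by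
      intro y hy
      rw [hF y, intervalIntegral.integral_symm, abs_neg, abs_of_nonneg]
      exact intervalIntegral.integral_nonneg hy.1 fun t _ => abs_nonneg _
    have hbound' : ∀ y ∈ Set.Icc (-x) (-x₀),
        ‖f' y‖ ≤ (∫ t in y..(-x₀), |W t|) ^ n / n.factorial := by
      intro y hy
      rw [hf'def, hWint y]
      have h1 := hbound (-y) (huIcc ▸ hmap y hy)
      rwa [hFkey (-y) (hmap y hy)] at h1
    have hres := half_statement W hW (-x) (-x₀) hab n f' hf' hbound'
    -- transform LHS
    have hLHS : (∫ t in (-x)..(-x₀), f' t * (W t : ℂ))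
        = ∫ t in x₀..x, f t * (V t : ℂ) := by
      have := intervalIntegral.integral_comp_neg (a := -x) (b := -x₀)
        (f := fun t => f t * (V t : ℂ))
      simpa [hf'def, hWdef] using this
    have hsym : (∫ t in x₀..x, f t * (V t : ℂ)) = -∫ t in x..x₀, f t * (V t : ℂ) :=
      intervalIntegral.integral_symm x x₀
    have hRHS : (∫ t in (-x)..(-x₀), |W t|) = F x := by
      rw [hWint (-x)]
      simp only [neg_neg]
      exact (hFkey x ⟨hgt.le, le_refl x⟩).symm
    rw [hLHS, hsym, norm_neg, hRHS] at hres
    exact hres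
end

section
/- Let c < b be real numbers, let V : ℝ → ℝ be Lebesgue integrable and vanish outside [a,b] (with c ≤ a < b), let C > 0, and let K : ℝ × ℝ → ℂ be such that for each x ∈ [c,b] the map t ↦ K(t,x) is measurable and |K(t,x)| ≤ C whenever c ≤ x ≤ t ≤ b. Define functions bₙ on [c,b] by b₀(x) = 1 and b_{n+1}(x) = −∫_x^b K(t,x)·V(t)·bₙ(t) dt. Then for every n ∈ ℕ and every x ∈ [c,b], |bₙ(x)| ≤ (C·∫_x^b |V(t)| dt)ⁿ/n!. -/
open MeasureTheory intervalIntegral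

lemma pow_sub_pow_le_aux (m : ℕ) (u v M : ℝ) (hv : 0 ≤ v) (hvu : v ≤ u) (huM : u ≤ M) :
    u ^ m - v ^ m ≤ m * M ^ (m - 1) * (u - v) := by
  induction m with
  | zero => simp
  | succ m ih =>
    have hu : 0 ≤ u := hv.trans hvu
    have hM : 0 ≤ M := hu.trans huM
    have h0 : u ^ m - v ^ m ≤ m * M ^ (m - 1) * (u - v) := ih
    have hnn : 0 ≤ (m : ℝ) * M ^ (m - 1) * (u - v) := by
      apply mul_nonneg (mul_nonneg (Nat.cast_nonneg m) (pow_nonneg hM _)) (by linarith)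
    have h1 : u * (u ^ m - v ^ m) ≤ M * (m * M ^ (m - 1) * (u - v)) :=
      (mul_le_mul_of_nonneg_left h0 hu).trans (mul_le_mul_of_nonneg_right huM hnn)
    have h2 : M * ((m : ℝ) * M ^ (m - 1) * (u - v)) = m * M ^ m * (u - v) := by
      cases m with
      | zero => simp
      | succ k => simp only [Nat.succ_sub_one]; push_cast; ring
    have h3 : v ^ m ≤ M ^ m := pow_le_pow_left₀ hv (hvu.trans huM) m
    have h4 : (u - v) * v ^ m ≤ (u - v) * M ^ m :=
      mul_le_mul_of_nonneg_left h3 (by linarith)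
    have key : u ^ (m + 1) - v ^ (m + 1) = u * (u ^ m - v ^ m) + (u - v) * v ^ m := by ring
    have : ((m : ℝ) + 1) * M ^ (m + 1 - 1) * (u - v) = m * M ^ m * (u - v) + (u - v) * M ^ m := by
      simp only [Nat.add_sub_cancel]; ring
    push_cast
    push_cast at this
    nlinarith [h1, h4]

set_option maxHeartbeats 1000000 in
lemma key_int (W : ℝ → ℝ) (hW : Integrable W) (hWpos : ∀ t, 0 ≤ W t)
    (b x : ℝ) (hxb : x ≤ b) (n : ℕ) :
    ∫ t in x..b, W t * (∫ s in t..b, W s) ^ n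
      ≤ (∫ s in x..b, W s) ^ (n + 1) / (n + 1) := by
  set F : ℝ → ℝ := fun t => ∫ s in t..b, W s with hF
  have hFsymm : F = fun t => -∫ s in b..t, W s := by
    funext t; rw [hF]; rw [intervalIntegral.integral_symm]; simp
  have hFcont : Continuous F := by
    rw [hFsymm]; exact (hW.continuous_primitive b).neg
  have hFanti : ∀ t₁ t₂ : ℝ, t₁ ≤ t₂ → F t₂ ≤ F t₁ := by
    intro t₁ t₂ h
    have hsplit : (∫ s in t₁..t₂, W s) + ∫ s in t₂..b, W s = ∫ s in t₁..b, W s :=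
      intervalIntegral.integral_add_adjacent_intervals hW.intervalIntegrable
        hW.intervalIntegrable
    have hpos : 0 ≤ ∫ s in t₁..t₂, W s :=
      intervalIntegral.integral_nonneg h (fun u _ => hWpos u)
    show (∫ s in t₂..b, W s) ≤ ∫ s in t₁..b, W s
    linarith
  have hFnonneg : ∀ t : ℝ, t ≤ b → 0 ≤ F t := fun t ht =>
    intervalIntegral.integral_nonneg ht (fun u _ => hWpos u)
  set M : ℝ := F x + 1 with hM
  have hFx0 : 0 ≤ F x := hFnonneg x hxb
  have hMpos : 0 < M := by rw [hM]; linarith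
  -- main estimate with epsilon
  have main : ∀ ε : ℝ, 0 < ε → ε ≤ 1 →
      ∫ t in x..b, W t * F t ^ n ≤ F x ^ (n + 1) / (n + 1) + ε * (n + 2) * M ^ n := by
    intro ε hε hε1
    obtain ⟨g, gsupp, hgL1, hgcont, hgint⟩ :=
      hW.exists_hasCompactSupport_integral_sub_le hε
    set g' : ℝ → ℝ := fun t => max (g t) 0 with hg'
    have hg'cont : Continuous g' := hgcont.max continuous_const
    have hg'pos : ∀ t, 0 ≤ g' t := fun t => le_max_right _ _
    have hg'int : Integrable g' := by
      refine hgint.mono hg'cont.aestronglyMeasurable (Filter.Eventually.of_forall fun t => ?_)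
      simp only [hg', Real.norm_eq_abs]
      rcases le_total (g t) 0 with h | h
      · simp [max_eq_right h]
      · simp [max_eq_left h]
    have hptW : ∀ t, |W t - g' t| ≤ |W t - g t| := by
      intro t
      rcases le_total (g t) 0 with h | h
      · have h' : g' t = 0 := max_eq_right h
        rw [h']
        have h1 : 0 ≤ W t := hWpos t
        rw [abs_of_nonneg (by linarith : (0:ℝ) ≤ W t - 0), abs_of_nonneg (by linarith)]
        linarith
      · have h' : g' t = g t := max_eq_left h
        rw [h']
    have hsubint : Integrable (fun t => |W t - g' t|) := (hW.sub hg'int).abs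
    have hL1 : ∫ t, |W t - g' t| ≤ ε := by
      calc ∫ t, |W t - g' t| ≤ ∫ t, |W t - g t| :=
            integral_mono hsubint (hW.sub hgint).abs hptW
        _ ≤ ε := by simpa [Real.norm_eq_abs] using hgL1
    set G : ℝ → ℝ := fun t => ∫ s in t..b, g' s with hG
    have hGsymm : G = fun u => -∫ s in b..u, g' s := by
      funext u; rw [hG]; rw [intervalIntegral.integral_symm]; simp
    have hGc : Continuous G := by
      rw [hGsymm]; exact (hg'int.continuous_primitive b).neg
    have hGdiff : ∀ t : ℝ, HasDerivAt G (-(g' t)) t := by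
      intro t
      have h1 : HasDerivAt (fun u => ∫ s in b..u, g' s) (g' t) t :=
        (hg'cont.integral_hasStrictDerivAt b t).hasDerivAt
      rw [hGsymm]; exact h1.neg
    have hGb : G b = 0 := by rw [hG]; exact intervalIntegral.integral_same
    have hGnonneg : ∀ t : ℝ, t ≤ b → 0 ≤ G t := fun t ht =>
      intervalIntegral.integral_nonneg ht (fun u _ => hg'pos u)
    -- |F t - G t| ≤ ε for t ≤ b
    have hFGclose : ∀ t : ℝ, t ≤ b → |F t - G t| ≤ ε := by
      intro t ht
      have hdiff : F t - G t = ∫ s in t..b, (W s - g' s) :=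
        (intervalIntegral.integral_sub hW.intervalIntegrable
          hg'int.intervalIntegrable).symm
      rw [hdiff]
      calc |∫ s in t..b, (W s - g' s)| ≤ ∫ s in t..b, |W s - g' s| := by
            simpa [Real.norm_eq_abs] using
              intervalIntegral.norm_integral_le_integral_norm (f := fun s => W s - g' s) ht
        _ ≤ ∫ s, |W s - g' s| := by
            rw [intervalIntegral.integral_of_le ht]
            exact setIntegral_le_integral hsubint
              (Filter.Eventually.of_forall fun s => abs_nonneg _)
        _ ≤ ε := hL1
    -- FTC exact computation for G
    have hn1 : ((n : ℝ) + 1) ≠ 0 := by positivity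
    have hFTC : ∫ t in x..b, g' t * G t ^ n = G x ^ (n + 1) / (n + 1) := by
      have hderiv : ∀ t ∈ Set.uIcc x b,
          HasDerivAt (fun u => G u ^ (n + 1))
            (((n : ℝ) + 1) * G t ^ n * (-(g' t))) t := by
        intro t _
        have h := (hGdiff t).pow (n + 1)
        have hcast : ((n + 1 : ℕ) : ℝ) * G t ^ (n + 1 - 1) * (-(g' t))
            = ((n : ℝ) + 1) * G t ^ n * (-(g' t)) := by
          simp [Nat.add_sub_cancel]
        rw [hcast] at h
        exact h
      have hcont : Continuous fun t => ((n : ℝ) + 1) * G t ^ n * (-(g' t)) :=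
        (continuous_const.mul (hGc.pow n)).mul hg'cont.neg
      have h2 := intervalIntegral.integral_eq_sub_of_hasDerivAt hderiv
        (hcont.intervalIntegrable x b)
      rw [hGb] at h2
      have h3 : ∫ t in x..b, ((n : ℝ) + 1) * G t ^ n * (-(g' t))
          = -((n : ℝ) + 1) * ∫ t in x..b, g' t * G t ^ n := by
        rw [← intervalIntegral.integral_const_mul]
        apply intervalIntegral.integral_congr
        intro t _; ring
      rw [h3] at h2
      rw [eq_div_iff hn1]
      have hz : (0:ℝ) ^ (n+1) = 0 := by simp
      nlinarith [h2]
    -- bounds on F, G on [x, b]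
    have hFle : ∀ t ∈ Set.Icc x b, F t ≤ M := fun t ht => by
      have := hFanti x t ht.1; rw [hM]; linarith
    have hGle : ∀ t ∈ Set.Icc x b, G t ≤ M := by
      intro t ht
      have h1 := abs_le.1 (hFGclose t ht.2)
      have h2 := hFanti x t ht.1
      rw [hM]
      linarith [h1.1, h1.2, hε1]
    -- pointwise comparison
    have hpt : ∀ t ∈ Set.Icc x b,
        W t * F t ^ n ≤ g' t * G t ^ n + |W t - g' t| * M ^ n
          + g' t * ((n : ℝ) * M ^ (n - 1) * ε) := by
      intro t ht
      have hF0 : 0 ≤ F t := hFnonneg t ht.2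
      have hG0 : 0 ≤ G t := hGnonneg t ht.2
      have hFM : F t ≤ M := hFle t ht
      have hGM : G t ≤ M := hGle t ht
      have e1 : (W t - g' t) * F t ^ n ≤ |W t - g' t| * M ^ n := by
        calc (W t - g' t) * F t ^ n ≤ |W t - g' t| * F t ^ n :=
              mul_le_mul_of_nonneg_right (le_abs_self _) (pow_nonneg hF0 n)
          _ ≤ |W t - g' t| * M ^ n :=
              mul_le_mul_of_nonneg_left (pow_le_pow_left₀ hF0 hFM n) (abs_nonneg _)
      have e2 : F t ^ n - G t ^ n ≤ (n : ℝ) * M ^ (n - 1) * ε := by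
        rcases le_total (G t) (F t) with h | h
        · have hh := pow_sub_pow_le_aux n (F t) (G t) M hG0 h hFM
          have habs := abs_le.1 (hFGclose t ht.2)
          have h2 : (n : ℝ) * M ^ (n - 1) * (F t - G t) ≤ (n : ℝ) * M ^ (n - 1) * ε := by
            apply mul_le_mul_of_nonneg_left _ (by positivity)
            linarith [habs.2]
          linarith
        · have h1 : F t ^ n ≤ G t ^ n := pow_le_pow_left₀ hF0 h n
          have h2 : (0:ℝ) ≤ (n : ℝ) * M ^ (n - 1) * ε := by positivity
          linarith
      have e2' : g' t * (F t ^ n - G t ^ n) ≤ g' t * ((n : ℝ) * M ^ (n - 1) * ε) :=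
        mul_le_mul_of_nonneg_left e2 (hg'pos t)
      nlinarith [e1, e2']
    -- integrate the comparison
    have int1 : IntervalIntegrable (fun t => W t * F t ^ n) volume x b :=
      hW.intervalIntegrable.mul_continuousOn ((hFcont.pow n).continuousOn)
    have intA : IntervalIntegrable (fun t => g' t * G t ^ n) volume x b :=
      (hg'cont.mul (hGc.pow n)).intervalIntegrable x b
    have intB : IntervalIntegrable (fun t => |W t - g' t| * M ^ n) volume x b :=
      hsubint.intervalIntegrable.mul_const _
    have intC : IntervalIntegrable
        (fun t => g' t * ((n : ℝ) * M ^ (n - 1) * ε)) volume x b :=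
      hg'int.intervalIntegrable.mul_const _
    have int2 : IntervalIntegrable
        (fun t => g' t * G t ^ n + |W t - g' t| * M ^ n
          + g' t * ((n : ℝ) * M ^ (n - 1) * ε)) volume x b :=
      (intA.add intB).add intC
    have hmono := intervalIntegral.integral_mono_on hxb int1 int2 hpt
    -- compute/bound the RHS integral
    have hsplit : ∫ t in x..b, (g' t * G t ^ n + |W t - g' t| * M ^ n
          + g' t * ((n : ℝ) * M ^ (n - 1) * ε))
        = (∫ t in x..b, g' t * G t ^ n) + (∫ t in x..b, |W t - g' t|) * M ^ n
          + (∫ t in x..b, g' t) * ((n : ℝ) * M ^ (n - 1) * ε) := by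
      rw [intervalIntegral.integral_add (intA.add intB) intC,
        intervalIntegral.integral_add intA intB,
        intervalIntegral.integral_mul_const, intervalIntegral.integral_mul_const]
    have hI1 : ∫ t in x..b, |W t - g' t| ≤ ε := by
      calc ∫ t in x..b, |W t - g' t| ≤ ∫ t, |W t - g' t| := by
            rw [intervalIntegral.integral_of_le hxb]
            exact setIntegral_le_integral hsubint
              (Filter.Eventually.of_forall fun s => abs_nonneg _)
        _ ≤ ε := hL1
    have hI2 : (∫ t in x..b, g' t) = G x := rfl
    have hI1' : 0 ≤ ∫ t in x..b, |W t - g' t| :=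
      intervalIntegral.integral_nonneg hxb (fun s _ => abs_nonneg _)
    have hGxM : G x ≤ M := hGle x ⟨le_refl x, hxb⟩
    have hGx0 : 0 ≤ G x := hGnonneg x hxb
    have hGxF : G x ≤ F x + ε := by
      have h := abs_le.1 (hFGclose x hxb); linarith [h.1]
    -- G x ^ (n+1) ≤ F x ^ (n+1) + (n+1) M^n ε
    have hGpow : G x ^ (n + 1) ≤ F x ^ (n + 1) + ((n : ℝ) + 1) * M ^ n * ε := by
      have h1 : G x ^ (n + 1) ≤ (F x + ε) ^ (n + 1) :=
        pow_le_pow_left₀ hGx0 hGxF _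
      have h2 := pow_sub_pow_le_aux (n + 1) (F x + ε) (F x) M
        hFx0 (by linarith) (by rw [hM]; linarith)
      simp only [Nat.add_sub_cancel] at h2
      push_cast at h2
      nlinarith
    -- combine
    have hMn : (0:ℝ) ≤ M ^ n := by positivity
    have t1 : G x ^ (n + 1) / (n + 1) ≤ F x ^ (n + 1) / (n + 1) + M ^ n * ε := by
      rw [div_le_iff₀ (by positivity : (0:ℝ) < (n:ℝ) + 1)]
      have he : F x ^ (n + 1) / ((n:ℝ) + 1) * ((n:ℝ) + 1) = F x ^ (n + 1) := by
        field_simp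
      rw [add_mul, he]
      nlinarith [hGpow, hMn, hε.le]
    have t2 : (∫ t in x..b, |W t - g' t|) * M ^ n ≤ ε * M ^ n :=
      mul_le_mul_of_nonneg_right hI1 hMn
    have t3 : G x * ((n : ℝ) * M ^ (n - 1) * ε) ≤ (n : ℝ) * M ^ n * ε := by
      cases n with
      | zero => simp
      | succ k =>
        simp only [Nat.succ_sub_one]
        have h5 : G x * (((k : ℝ) + 1) * M ^ k * ε) ≤ M * (((k : ℝ) + 1) * M ^ k * ε) :=
          mul_le_mul_of_nonneg_right hGxM (by positivity)
        have h6 : M * (((k:ℝ) + 1) * M ^ k * ε) = ((k:ℝ) + 1) * M ^ (k + 1) * ε := by ring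
        push_cast
        linarith [h5, h6]
    calc ∫ t in x..b, W t * F t ^ n
        ≤ _ := hmono
      _ = (∫ t in x..b, g' t * G t ^ n) + (∫ t in x..b, |W t - g' t|) * M ^ n
          + (∫ t in x..b, g' t) * ((n : ℝ) * M ^ (n - 1) * ε) := hsplit
      _ ≤ G x ^ (n + 1) / (n + 1) + ε * M ^ n + (n : ℝ) * M ^ n * ε := by
          rw [hFTC, hI2]; push_cast; linarith [t2, t3]
      _ ≤ F x ^ (n + 1) / (n + 1) + ε * (n + 2) * M ^ n := by
          push_cast; nlinarith [t1]
  -- conclude by letting ε → 0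
  have hKpos : (0:ℝ) < (n + 2) * M ^ n := by positivity
  apply le_of_forall_pos_le_add
  intro δ hδ
  set ε : ℝ := min 1 (δ / ((n + 2) * M ^ n)) with hε
  have hεpos : 0 < ε := lt_min one_pos (by positivity)
  have hε1 : ε ≤ 1 := min_le_left _ _
  have h := main ε hεpos hε1
  have hle : ε * (n + 2) * M ^ n ≤ δ := by
    have h2 : ε ≤ δ / ((n + 2) * M ^ n) := min_le_right _ _
    calc ε * (n + 2) * M ^ n = ε * ((n + 2) * M ^ n) := by ring
      _ ≤ δ / ((n + 2) * M ^ n) * ((n + 2) * M ^ n) :=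
          mul_le_mul_of_nonneg_right h2 hKpos.le
      _ = δ := by field_simp
  linarith

/-- A Gronwall-type bound for the Picard iterates of a Volterra
equation with a bounded kernel and an integrable potential supported in `[a,b]`. -/
theorem statement2
    (a b c : ℝ) (hcb : c < b) (hca : c ≤ a) (hab : a < b)
    (V : ℝ → ℝ) (hV : Integrable V)
    (hVsupp : ∀ x, x ∉ Set.Icc a b → V x = 0)
    (C : ℝ) (hC : 0 < C)
    (K : ℝ × ℝ → ℂ)
    (hKmeas : ∀ x ∈ Set.Icc c b, Measurable fun t => K (t, x))
    (hKbound : ∀ x t : ℝ, c ≤ x → x ≤ t → t ≤ b → ‖K (t, x)‖ ≤ C)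
    (B : ℕ → ℝ → ℂ)
    (hB0 : ∀ x, B 0 x = 1)
    (hBrec : ∀ n : ℕ, ∀ x, B (n + 1) x = -∫ t in x..b, K (t, x) * (V t : ℂ) * B n t) :
    ∀ n : ℕ, ∀ x ∈ Set.Icc c b,
      ‖B n x‖ ≤ (C * ∫ t in x..b, |V t|) ^ n / n.factorial := by
  have hW : Integrable (fun t => |V t|) := hV.abs
  have hFcont : Continuous fun t : ℝ => ∫ s in t..b, |V s| := by
    have h1 : (fun t : ℝ => ∫ s in t..b, |V s|) = fun t => -∫ s in b..t, |V s| := by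
      funext t; rw [intervalIntegral.integral_symm]
    rw [h1]; exact (hW.continuous_primitive b).neg
  intro n
  induction n with
  | zero =>
    intro x hx
    simp [hB0]
  | succ n ih =>
    intro x hx
    have hxb : x ≤ b := hx.2
    have hcx : c ≤ x := hx.1
    have hFx0 : 0 ≤ ∫ t in x..b, |V t| :=
      intervalIntegral.integral_nonneg hxb (fun u _ => abs_nonneg _)
    have hRHS0 : 0 ≤ (C * ∫ t in x..b, |V t|) ^ (n + 1) / (n + 1).factorial := by
      apply div_nonneg (pow_nonneg (mul_nonneg hC.le hFx0) _) (Nat.cast_nonneg _)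
    rw [hBrec, norm_neg]
    by_cases hint : IntervalIntegrable (fun t => K (t, x) * (V t : ℂ) * B n t) volume x b
    · have step1 : ‖∫ t in x..b, K (t, x) * (V t : ℂ) * B n t‖
          ≤ ∫ t in x..b, ‖K (t, x) * (V t : ℂ) * B n t‖ := by
        exact intervalIntegral.norm_integral_le_integral_norm hxb
      have step2 : ∫ t in x..b, ‖K (t, x) * (V t : ℂ) * B n t‖
          ≤ ∫ t in x..b, C * |V t| * ((C * ∫ s in t..b, |V s|) ^ n / n.factorial) := by
        apply intervalIntegral.integral_mono_on hxb hint.norm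
        · apply IntervalIntegrable.mul_continuousOn
          · exact (hW.intervalIntegrable).const_mul C
          · exact (((continuous_const.mul hFcont).pow n).div_const _).continuousOn
        · intro t ht
          have htb : t ≤ b := ht.2
          have hxt : x ≤ t := ht.1
          have hKb := hKbound x t hcx hxt htb
          have hBn := ih t ⟨hcx.trans hxt, htb⟩
          rw [norm_mul, norm_mul, Complex.norm_real, Real.norm_eq_abs]
          have h1 : 0 ≤ |V t| := abs_nonneg _
          have h2 : 0 ≤ ‖B n t‖ := norm_nonneg _
          have h3 : 0 ≤ (C * ∫ s in t..b, |V s|) ^ n / n.factorial := by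
            apply div_nonneg (pow_nonneg (mul_nonneg hC.le
              (intervalIntegral.integral_nonneg htb (fun u _ => abs_nonneg _))) _)
              (Nat.cast_nonneg _)
          calc ‖K (t, x)‖ * |V t| * ‖B n t‖
              ≤ C * |V t| * ‖B n t‖ := by
                apply mul_le_mul_of_nonneg_right
                  (mul_le_mul_of_nonneg_right hKb h1) h2
            _ ≤ C * |V t| * ((C * ∫ s in t..b, |V s|) ^ n / n.factorial) := by
                apply mul_le_mul_of_nonneg_left hBn (mul_nonneg hC.le h1)
      have step3 : ∫ t in x..b, C * |V t| * ((C * ∫ s in t..b, |V s|) ^ n / n.factorial)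
          = (C ^ (n + 1) / n.factorial) * ∫ t in x..b, |V t| * (∫ s in t..b, |V s|) ^ n := by
        rw [← intervalIntegral.integral_const_mul]
        apply intervalIntegral.integral_congr
        intro t _
        simp only [mul_pow]
        ring
      have step4 : ∫ t in x..b, |V t| * (∫ s in t..b, |V s|) ^ n
          ≤ (∫ s in x..b, |V s|) ^ (n + 1) / (n + 1) :=
        key_int (fun t => |V t|) hW (fun t => abs_nonneg _) b x hxb n
      have hCn : 0 ≤ C ^ (n + 1) / n.factorial :=
        div_nonneg (pow_nonneg hC.le _) (Nat.cast_nonneg _)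
      calc ‖∫ t in x..b, K (t, x) * (V t : ℂ) * B n t‖
          ≤ ∫ t in x..b, ‖K (t, x) * (V t : ℂ) * B n t‖ := step1
        _ ≤ ∫ t in x..b, C * |V t| * ((C * ∫ s in t..b, |V s|) ^ n / n.factorial) := step2
        _ = (C ^ (n + 1) / n.factorial) * ∫ t in x..b, |V t| * (∫ s in t..b, |V s|) ^ n :=
            step3
        _ ≤ (C ^ (n + 1) / n.factorial) * ((∫ s in x..b, |V s|) ^ (n + 1) / (n + 1)) :=
            mul_le_mul_of_nonneg_left step4 hCn
        _ = (C * ∫ t in x..b, |V t|) ^ (n + 1) / (n + 1).factorial := by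
            rw [mul_pow, Nat.factorial_succ, div_mul_div_comm]
            push_cast
            ring
    · rw [intervalIntegral.integral_undef hint]
      simpa using hRHS0
end

section
/- For every ζ ∈ Ū the Jost integral equation at ζ has exactly one continuous solution b : (−∞, b] → ℂ, and this solution satisfies |b(x)| ≤ exp((b − x)·∫_x^b |V(t)| dt) for every x ≤ b. -/
open MeasureTheory intervalIntegral
open Nat

/-- The kernel `κ_ζ(s) = (e^{2iζs} − 1)/(2iζ)` for `ζ ≠ 0`, and `κ₀(s) = s`. -/
noncomputable def kappa (ζ : ℂ) (s : ℝ) : ℂ :=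
  if ζ = 0 then (s : ℂ)
  else (Complex.exp (2 * Complex.I * ζ * s) - 1) / (2 * Complex.I * ζ)


lemma norm_exp_sub_one_le_of_re_nonpos {z : ℂ} (hz : z.re ≤ 0) :
    ‖Complex.exp z - 1‖ ≤ ‖z‖ := by
  have hderiv : ∀ t ∈ Set.uIcc (0:ℝ) 1, HasDerivAt (fun t : ℝ => Complex.exp (t * z))
      (z * Complex.exp (t * z)) t := by
    intro t _
    have h1 : HasDerivAt (fun t : ℝ => (t : ℂ) * z) z t := by
      simpa using (Complex.ofRealCLM.hasDerivAt (x := t)).mul_const z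
    simpa [mul_comm] using h1.cexp
  have hint : IntervalIntegrable (fun t : ℝ => z * Complex.exp (t * z)) volume 0 1 :=
    (Continuous.intervalIntegrable (by continuity) 0 1)
  have h := intervalIntegral.integral_eq_sub_of_hasDerivAt hderiv hint
  simp only [Complex.ofReal_one, Complex.ofReal_zero, one_mul, zero_mul, Complex.exp_zero] at h
  rw [← h]
  have : ∀ t ∈ Set.Ioc (0:ℝ) 1, ‖z * Complex.exp (t * z)‖ ≤ ‖z‖ := by
    intro t ht
    rw [norm_mul]
    have : ‖Complex.exp (t * z)‖ ≤ 1 := by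
      rw [Complex.norm_exp]
      have : ((t : ℂ) * z).re = t * z.re := by simp
      rw [this]
      exact Real.exp_le_one_iff.mpr (mul_nonpos_of_nonneg_of_nonpos ht.1.le hz)
    nlinarith [norm_nonneg z]
  calc ‖∫ t in (0:ℝ)..1, z * Complex.exp (t * z)‖ ≤ ‖z‖ * |1 - 0| :=
        intervalIntegral.norm_integral_le_of_norm_le_const (by
          intro t ht
          rw [Set.uIoc_of_le zero_le_one] at ht
          exact this t ht)
    _ = ‖z‖ := by norm_num

lemma kappa_zero (ζ : ℂ) : kappa ζ 0 = 0 := by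
  unfold kappa; split <;> simp

lemma kappa_cont (ζ : ℂ) : Continuous (kappa ζ) := by
  unfold kappa
  split
  · exact Complex.continuous_ofReal
  · fun_prop

lemma kappa_norm_le (ζ : ℂ) (hζ : 0 ≤ ζ.im) {s : ℝ} (hs : 0 ≤ s) :
    ‖kappa ζ s‖ ≤ s := by
  unfold kappa
  split
  · simp [abs_of_nonneg hs]
  · rename_i h0
    rw [norm_div]
    have hre : (2 * Complex.I * ζ * s).re ≤ 0 := by
      have h : (2 * Complex.I * ζ * s).re = -(2 * ζ.im * s) := by
        simp [Complex.mul_re, Complex.mul_im]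
        try ring
      rw [h]
      have : 0 ≤ 2 * ζ.im * s := by positivity
      linarith
    have h1 := norm_exp_sub_one_le_of_re_nonpos hre
    have h2 : ‖2 * Complex.I * ζ * (s:ℂ)‖ = ‖2 * Complex.I * ζ‖ * s := by
      rw [norm_mul]
      simp [abs_of_nonneg hs]
    have h3 : 0 < ‖2 * Complex.I * ζ‖ := by
      rw [norm_pos_iff]
      simp [h0, Complex.I_ne_zero]
    rw [div_le_iff₀ h3]
    rw [h2] at h1
    linarith

lemma triangle_swap {x b : ℝ} (w G : ℝ → ℝ)
    (hw : IntegrableOn w (Set.Ioc x b)) (hG : IntegrableOn G (Set.Ioc x b)) :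
    ∫ t in Set.Ioc x b, w t * ∫ s in Set.Ioc t b, G s
      = ∫ s in Set.Ioc x b, (∫ t in Set.Ioc x s, w t) * G s := by
  set μ := volume.restrict (Set.Ioc x b) with hμ
  have hwG : Integrable (fun p : ℝ × ℝ => w p.1 * G p.2) (μ.prod μ) := hw.mul_prod hG
  have hmeas : MeasurableSet {p : ℝ × ℝ | p.1 < p.2} :=
    measurableSet_lt measurable_fst measurable_snd
  have hK : Integrable (fun p : ℝ × ℝ => if p.1 < p.2 then w p.1 * G p.2 else 0) (μ.prod μ) := by
    have h := hwG.indicator hmeas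
    have : ({p : ℝ × ℝ | p.1 < p.2}.indicator (fun p : ℝ × ℝ => w p.1 * G p.2))
        = fun p : ℝ × ℝ => if p.1 < p.2 then w p.1 * G p.2 else 0 := by
      funext p; simp [Set.indicator_apply]
    rwa [this] at h
  have swap := MeasureTheory.integral_integral_swap
    (f := fun t s => if t < s then w t * G s else 0) hK
  have hL : (∫ t, (∫ s, (if t < s then w t * G s else 0) ∂μ) ∂μ)
      = ∫ t in Set.Ioc x b, w t * ∫ s in Set.Ioc t b, G s := by
    apply setIntegral_congr_fun measurableSet_Ioc
    intro t ht
    simp only []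
    have h1 : (fun s => if t < s then w t * G s else 0)
        = (Set.Ioi t).indicator (fun s => w t * G s) := by
      funext s; simp [Set.indicator_apply, Set.mem_Ioi]
    rw [h1, hμ, MeasureTheory.integral_indicator measurableSet_Ioi,
      Measure.restrict_restrict measurableSet_Ioi]
    have h2 : Set.Ioi t ∩ Set.Ioc x b = Set.Ioc t b := by
      ext s
      simp only [Set.mem_inter_iff, Set.mem_Ioi, Set.mem_Ioc]
      exact ⟨fun ⟨h, _, h3⟩ => ⟨h, h3⟩, fun ⟨h, h3⟩ => ⟨h, lt_trans ht.1 h, h3⟩⟩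
    rw [h2, MeasureTheory.integral_const_mul]
  have hR : (∫ s, (∫ t, (if t < s then w t * G s else 0) ∂μ) ∂μ)
      = ∫ s in Set.Ioc x b, (∫ t in Set.Ioc x s, w t) * G s := by
    apply setIntegral_congr_fun measurableSet_Ioc
    intro s hs
    simp only []
    have h1 : (fun t => if t < s then w t * G s else 0)
        = (Set.Iio s).indicator (fun t => w t * G s) := by
      funext t; simp [Set.indicator_apply, Set.mem_Iio]
    rw [h1, hμ, MeasureTheory.integral_indicator measurableSet_Iio,
      Measure.restrict_restrict measurableSet_Iio]
    have h2 : Set.Iio s ∩ Set.Ioc x b = Set.Ioo x s := by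
      ext t
      simp only [Set.mem_inter_iff, Set.mem_Iio, Set.mem_Ioc, Set.mem_Ioo]
      exact ⟨fun ⟨h, h3, _⟩ => ⟨h3, h⟩, fun ⟨h3, h⟩ => ⟨h, h3, le_trans h.le hs.2⟩⟩
    rw [h2, MeasureTheory.integral_mul_const, ← integral_Ioc_eq_integral_Ioo]
  rw [← hL, ← hR]
  exact swap

lemma F_continuous {b : ℝ} {w : ℝ → ℝ} (hw : Integrable w) :
    Continuous (fun t => ∫ s in t..b, w s) := by
  have h := intervalIntegral.continuous_primitive (fun a b => hw.intervalIntegrable) b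
  have : (fun t => ∫ s in t..b, w s) = fun t => -∫ s in b..t, w s := by
    funext t; rw [intervalIntegral.integral_symm]
  rw [this]
  exact h.neg

lemma wFn_integrable {b : ℝ} {w : ℝ → ℝ} (hw : Integrable w) (n : ℕ) (x y : ℝ) :
    IntervalIntegrable (fun s => w s * (∫ u in s..b, w u) ^ n) volume x y :=
  (hw.intervalIntegrable).mul_continuousOn (((F_continuous hw).pow n).continuousOn)

lemma key_identity {b : ℝ} {w : ℝ → ℝ} (hw : Integrable w) :
    ∀ (n : ℕ) (x : ℝ), x ≤ b →
      ∫ t in x..b, w t * (∫ s in t..b, w s) ^ n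
        = (∫ t in x..b, w t) ^ (n + 1) / (n + 1) := by
  intro n
  induction n with
  | zero => intro x hx; simp
  | succ n IH =>
    intro x hx
    set F : ℝ → ℝ := fun t => ∫ s in t..b, w s with hF
    have contF : Continuous F := F_continuous hw
    -- step 1: rewrite integrand using IH
    have step1 : ∫ t in x..b, w t * F t ^ (n + 1)
        = (n + 1 : ℝ) * ∫ t in x..b, w t * ∫ s in t..b, w s * F s ^ n := by
      rw [← intervalIntegral.integral_const_mul]
      apply intervalIntegral.integral_congr
      intro t ht
      rw [Set.uIcc_of_le hx] at ht
      have h := IH t ht.2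
      simp only []
      rw [h]
      have hne : ((n:ℝ) + 1) ≠ 0 := by positivity
      field_simp
      try ring
    -- step 2: convert to set integrals and swap
    have hG : IntegrableOn (fun s => w s * F s ^ n) (Set.Ioc x b) :=
      (wFn_integrable hw n x b).1
    have hG1 : IntegrableOn (fun s => w s * F s ^ (n+1)) (Set.Ioc x b) :=
      (wFn_integrable hw (n+1) x b).1
    have step2 : ∫ t in x..b, w t * ∫ s in t..b, w s * F s ^ n
        = ∫ t in Set.Ioc x b, w t * ∫ s in Set.Ioc t b, w s * F s ^ n := by
      rw [intervalIntegral.integral_of_le hx]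
      apply setIntegral_congr_fun measurableSet_Ioc
      intro t ht
      simp only []
      rw [intervalIntegral.integral_of_le ht.2]
    have swap := triangle_swap w (fun s => w s * F s ^ n) hw.integrableOn hG
    -- step 3: compute inner integral after swap
    have step3 : ∫ s in Set.Ioc x b, (∫ t in Set.Ioc x s, w t) * (w s * F s ^ n)
        = ∫ s in Set.Ioc x b, (F x - F s) * (w s * F s ^ n) := by
      apply setIntegral_congr_fun measurableSet_Ioc
      intro s hs
      simp only []
      congr 1
      rw [← intervalIntegral.integral_of_le hs.1.le]
      have hadd := intervalIntegral.integral_add_adjacent_intervals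
        (hw.intervalIntegrable (a := x) (b := s)) (hw.intervalIntegrable (a := s) (b := b))
      have : F x = (∫ t in x..s, w t) + F s := hadd.symm
      linarith
    -- step 4: expand
    have step4 : ∫ s in Set.Ioc x b, (F x - F s) * (w s * F s ^ n)
        = F x * (∫ s in Set.Ioc x b, w s * F s ^ n)
          - ∫ s in Set.Ioc x b, w s * F s ^ (n+1) := by
      have he : ∀ s, (F x - F s) * (w s * F s ^ n)
          = F x * (w s * F s ^ n) - w s * F s ^ (n+1) := by intro s; ring
      simp only [he]
      rw [integral_sub (hG.const_mul _) hG1, MeasureTheory.integral_const_mul]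
    have hIHx : ∫ s in Set.Ioc x b, w s * F s ^ n = F x ^ (n+1) / (n+1) := by
      rw [← intervalIntegral.integral_of_le hx]; exact IH x hx
    have hA : ∫ s in Set.Ioc x b, w s * F s ^ (n+1)
        = ∫ t in x..b, w t * F t ^ (n+1) := by
      rw [intervalIntegral.integral_of_le hx]
    set A := ∫ t in x..b, w t * F t ^ (n + 1) with hAdef
    have hne : ((n:ℝ) + 1) ≠ 0 := by positivity
    have hne2 : ((n:ℝ) + 2) ≠ 0 := by positivity
    have chain : (n+1 : ℝ) * ∫ t in x..b, w t * ∫ s in t..b, w s * F s ^ n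
        = (n+1 : ℝ) * (F x * (F x ^ (n+1) / (n+1)) - A) := by
      rw [step2, swap, step3, step4, hIHx, hA]
    have main := step1.trans chain
    have e1 : (n+1 : ℝ) * (F x * (F x ^ (n+1) / (n+1)) - A)
        = F x ^ (n+2) - (n+1) * A := by
      field_simp
      ring
    rw [e1] at main
    have goal2 : A = F x ^ (n+2) / ((n:ℝ)+2) := by
      rw [eq_div_iff hne2]
      linarith
    show A = F x ^ (n+1+1) / (↑(n+1) + 1)
    push_cast
    rw [show n+1+1 = n+2 from rfl, show ((n:ℝ)+1+1) = (n:ℝ)+2 by ring]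
    exact goal2

noncomputable def picard (ζ : ℂ) (V : ℝ → ℝ) (b : ℝ) : ℕ → ℝ → ℂ
  | 0 => fun _ => 1
  | (n+1) => fun x => ∫ t in x..b, kappa ζ (t - x) * (V t : ℂ) * picard ζ V b n t

lemma intble_gen {V : ℝ → ℝ} (hV : Integrable V) {k : ℝ → ℂ} (hk : Continuous k)
    {h : ℝ → ℂ} {x y : ℝ} (hh : ContinuousOn h (Set.uIcc x y)) :
    IntervalIntegrable (fun t => k t * (V t : ℂ) * h t) volume x y := by
  have he : (fun t => k t * (V t:ℂ) * h t) = fun t => (k t * h t) * (V t:ℂ) := by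
    funext t; ring
  rw [he]
  exact (hV.ofReal.intervalIntegrable).continuousOn_mul ((hk.continuousOn).mul hh)

lemma cont_step (ζ : ℂ) (hζ : 0 ≤ ζ.im) {V : ℝ → ℝ} (hV : Integrable V) {b : ℝ} {h : ℝ → ℂ}
    (hh : ContinuousOn h (Set.Iic b)) :
    ContinuousOn (fun x => ∫ t in x..b, kappa ζ (t - x) * (V t : ℂ) * h t) (Set.Iic b) := by
  intro x₀ hx₀
  set c := x₀ - 1 with hc
  have hcx : c < x₀ := by simp [hc]
  have hcb : c < b := lt_of_lt_of_le hcx hx₀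
  obtain ⟨M, hM⟩ := (isCompact_Icc (a := c) (b := b)).exists_bound_of_continuousOn
    (hh.mono Set.Icc_subset_Iic_self)
  set G : ℝ → ℝ → ℂ := fun y t => kappa ζ (max (t - y) 0) * (V t : ℂ) * h t with hG
  have hkmax : ∀ y : ℝ, Continuous fun t : ℝ => kappa ζ (max (t - y) 0) := fun y =>
    (kappa_cont ζ).comp (by continuity)
  have heq : ∀ y ∈ Set.Ioi c ∩ Set.Iic b,
      (∫ t in y..b, kappa ζ (t - y) * (V t : ℂ) * h t) = ∫ t in c..b, G y t := by
    rintro y ⟨hy1, hy2⟩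
    have hy1' : c ≤ y := le_of_lt hy1
    have huIcc1 : Set.uIcc c y ⊆ Set.Iic b := by
      rw [Set.uIcc_of_le hy1']
      exact fun t ht => le_trans ht.2 hy2
    have huIcc2 : Set.uIcc y b ⊆ Set.Iic b := by
      rw [Set.uIcc_of_le hy2]
      exact fun t ht => ht.2
    have h1 : IntervalIntegrable (G y) volume c y :=
      intble_gen hV (hkmax y) (hh.mono huIcc1)
    have h2 : IntervalIntegrable (G y) volume y b :=
      intble_gen hV (hkmax y) (hh.mono huIcc2)
    rw [← intervalIntegral.integral_add_adjacent_intervals h1 h2]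
    have hz : ∫ t in c..y, G y t = 0 := by
      rw [show (0:ℂ) = ∫ _ in c..y, (0:ℂ) by simp]
      apply intervalIntegral.integral_congr
      intro t ht
      rw [Set.uIcc_of_le hy1'] at ht
      have : max (t - y) 0 = 0 := max_eq_right (by linarith [ht.2])
      simp [hG, this, kappa_zero]
    rw [hz, zero_add]
    apply intervalIntegral.integral_congr
    intro t ht
    rw [Set.uIcc_of_le hy2] at ht
    have : max (t - y) 0 = t - y := max_eq_left (by linarith [ht.1])
    simp [hG, this]
  have hM0 : ∀ t ∈ Set.Icc c b, ‖h t‖ ≤ max M 0 := fun t ht =>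
    le_trans (hM t ht) (le_max_left _ _)
  have hcw : ContinuousWithinAt (fun y => ∫ t in c..b, G y t) (Set.Iic b) x₀ := by
    apply intervalIntegral.continuousWithinAt_of_dominated_interval
      (bound := fun t => (b - c) * |V t| * max M 0)
    · apply Filter.Eventually.of_forall
      intro y
      apply AEStronglyMeasurable.mul
      apply AEStronglyMeasurable.mul
      · exact (hkmax y).aestronglyMeasurable
      · exact (Complex.continuous_ofReal.comp_aestronglyMeasurable
          hV.aestronglyMeasurable).restrict
      · have : volume.restrict (Set.uIoc c b) ≤ volume.restrict (Set.Iic b) := by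
          rw [Set.uIoc_of_le hcb.le]
          exact Measure.restrict_mono (fun t ht => ht.2) le_rfl
        exact (hh.aestronglyMeasurable measurableSet_Iic).mono_measure this
    · filter_upwards [mem_nhdsWithin_of_mem_nhds (Ioi_mem_nhds hcx)] with y hy
      apply Filter.Eventually.of_forall
      intro t ht
      rw [Set.uIoc_of_le hcb.le] at ht
      have hVt : ‖(V t : ℂ)‖ = |V t| := by
        rw [Complex.norm_real]; rfl
      have hk1 : ‖kappa ζ (max (t - y) 0)‖ ≤ b - c := by
        refine le_trans (kappa_norm_le ζ hζ (le_max_right _ _)) ?_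
        have : t - y ≤ b - c := by
          have := ht.2
          have : t ≤ b := ht.2
          have : c < y := hy
          linarith [ht.2, (hy : c < y)]
        exact max_le this (by linarith)
      calc ‖G y t‖ = ‖kappa ζ (max (t - y) 0)‖ * |V t| * ‖h t‖ := by
            rw [hG]; simp only []; rw [norm_mul, norm_mul, hVt]
        _ ≤ (b - c) * |V t| * max M 0 := by
            apply mul_le_mul (mul_le_mul hk1 le_rfl (abs_nonneg _) (by linarith))
              (hM0 t ⟨ht.1.le, ht.2⟩) (norm_nonneg _)
              (mul_nonneg (by linarith) (abs_nonneg _))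
    · exact (((hV.abs).intervalIntegrable).const_mul (b - c)).mul_const (max M 0)
    · apply Filter.Eventually.of_forall
      intro t _
      apply Continuous.continuousWithinAt
      exact (((kappa_cont ζ).comp (by continuity)).mul continuous_const).mul continuous_const
  apply hcw.congr_of_eventuallyEq
  · have hmem : Set.Ioi c ∩ Set.Iic b ∈ nhdsWithin x₀ (Set.Iic b) :=
      Filter.inter_mem (mem_nhdsWithin_of_mem_nhds (Ioi_mem_nhds hcx)) self_mem_nhdsWithin
    filter_upwards [hmem] with y hy
    exact heq y hy
  · exact heq x₀ ⟨hcx, hx₀⟩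

lemma picard_contOn (ζ : ℂ) (hζ : 0 ≤ ζ.im) {V : ℝ → ℝ} (hV : Integrable V) (b : ℝ) :
    ∀ n, ContinuousOn (picard ζ V b n) (Set.Iic b)
  | 0 => continuousOn_const
  | (n+1) => cont_step ζ hζ hV (picard_contOn ζ hζ hV b n)

lemma F_nonneg {b : ℝ} {w : ℝ → ℝ} (hw0 : ∀ t, 0 ≤ w t) {x : ℝ} (hx : x ≤ b) :
    0 ≤ ∫ s in x..b, w s :=
  intervalIntegral.integral_nonneg hx (fun u _ => hw0 u)

lemma picard_norm_le (ζ : ℂ) (hζ : 0 ≤ ζ.im) {V : ℝ → ℝ} (hV : Integrable V) (b : ℝ) :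
    ∀ (n : ℕ) {x : ℝ}, x ≤ b →
      ‖picard ζ V b n x‖ ≤ ((b - x) * ∫ t in x..b, |V t|) ^ n / n ! := by
  intro n
  induction n with
  | zero => intro x hx; simp [picard]
  | succ n IH =>
    intro x hx
    set w : ℝ → ℝ := fun t => |V t| with hw
    have hwint : Integrable w := hV.abs
    have hw0 : ∀ t, 0 ≤ w t := fun t => abs_nonneg _
    set F : ℝ → ℝ := fun t => ∫ s in t..b, w s with hF
    have contF : Continuous F := F_continuous hwint
    have hI : IntervalIntegrable (fun t => kappa ζ (t - x) * (V t : ℂ) * picard ζ V b n t)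
        volume x b := by
      apply intble_gen hV ((kappa_cont ζ).comp (by continuity))
      refine (picard_contOn ζ hζ hV b n).mono ?_
      rw [Set.uIcc_of_le hx]
      exact fun t ht => ht.2
    have hg : IntervalIntegrable (fun t => ((b-x)^(n+1) / n !) * (w t * F t ^ n)) volume x b :=
      (wFn_integrable hwint n x b).const_mul _
    have hstep : ‖picard ζ V b (n+1) x‖
        ≤ ∫ t in x..b, ((b-x)^(n+1) / n !) * (w t * F t ^ n) := by
      show ‖∫ t in x..b, kappa ζ (t - x) * (V t : ℂ) * picard ζ V b n t‖ ≤ _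
      refine le_trans (intervalIntegral.norm_integral_le_integral_norm hx) ?_
      apply intervalIntegral.integral_mono_on hx hI.norm hg
      intro t ht
      have ht1 : x ≤ t := ht.1
      have ht2 : t ≤ b := ht.2
      have hFt : 0 ≤ F t := F_nonneg hw0 ht2
      have hVt : ‖(V t : ℂ)‖ = w t := by rw [Complex.norm_real]; rfl
      have hk : ‖kappa ζ (t - x)‖ ≤ t - x := kappa_norm_le ζ hζ (by linarith)
      have hp : ‖picard ζ V b n t‖ ≤ ((b - t) * F t) ^ n / n ! := IH ht2
      calc ‖kappa ζ (t - x) * (V t : ℂ) * picard ζ V b n t‖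
          = ‖kappa ζ (t - x)‖ * w t * ‖picard ζ V b n t‖ := by
            rw [norm_mul, norm_mul, hVt]
        _ ≤ (b - x) * w t * (((b - x) * F t) ^ n / n !) := by
            apply mul_le_mul
            · apply mul_le_mul (le_trans hk (by linarith)) le_rfl (hw0 t) (by linarith)
            · refine le_trans hp ?_
              have hfac : (0:ℝ) < n ! := by positivity
              have hbnn : 0 ≤ (b - t) * F t := mul_nonneg (by linarith) hFt
              have hbase : (b - t) * F t ≤ (b - x) * F t :=
                mul_le_mul_of_nonneg_right (by linarith) hFt
              exact (div_le_div_iff_of_pos_right hfac).mpr (pow_le_pow_left₀ hbnn hbase n)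
            · exact norm_nonneg _
            · exact mul_nonneg (by linarith) (hw0 t)
        _ = ((b-x)^(n+1) / n !) * (w t * F t ^ n) := by
            rw [mul_pow]
            field_simp
            ring
    refine le_trans hstep ?_
    rw [intervalIntegral.integral_const_mul, key_identity hwint n x hx]
    rw [mul_pow, Nat.factorial_succ]
    push_cast
    have h1 : (0:ℝ) < n ! := by positivity
    have h2 : (0:ℝ) < (n:ℝ) + 1 := by positivity
    apply le_of_eq
    field_simp

lemma F_le {b : ℝ} {w : ℝ → ℝ} (hw : Integrable w) (hw0 : ∀ t, 0 ≤ w t) {x t : ℝ}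
    (hxt : x ≤ t) : (∫ s in t..b, w s) ≤ ∫ s in x..b, w s := by
  have hadd := intervalIntegral.integral_add_adjacent_intervals
    (hw.intervalIntegrable (a := x) (b := t)) (hw.intervalIntegrable (a := t) (b := b))
  have h0 : 0 ≤ ∫ s in x..t, w s := intervalIntegral.integral_nonneg hxt (fun u _ => hw0 u)
  linarith

lemma F_le_total {b : ℝ} {w : ℝ → ℝ} (hw : Integrable w) (hw0 : ∀ t, 0 ≤ w t) {x : ℝ}
    (hx : x ≤ b) : (∫ s in x..b, w s) ≤ ∫ t, w t := by
  rw [intervalIntegral.integral_of_le hx]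
  exact setIntegral_le_integral hw (Filter.Eventually.of_forall hw0)


/-- For every `ζ` in the closed upper half-plane, the Jost
integral equation `f(x) = 1 + ∫_x^b κ_ζ(t−x) V(t) f(t) dt` has exactly one
continuous solution on `(−∞, b]`, and it satisfies
`|f(x)| ≤ exp((b − x) ∫_x^b |V|)` for all `x ≤ b`. -/
theorem statement3
    (a b : ℝ) (hab : a < b)
    (V : ℝ → ℝ) (hV : Integrable V)
    (hVsupp : ∀ x, x ∉ Set.Icc a b → V x = 0)
    (ζ : ℂ) (hζ : 0 ≤ ζ.im) :
    ∃ f : ℝ → ℂ,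
      (ContinuousOn f (Set.Iic b) ∧
        ∀ x ≤ b, f x = 1 + ∫ t in x..b, kappa ζ (t - x) * (V t : ℂ) * f t) ∧
      (∀ x ≤ b,
        ‖f x‖ ≤ Real.exp ((b - x) * ∫ t in x..b, |V t|)) ∧
      (∀ g : ℝ → ℂ, ContinuousOn g (Set.Iic b) →
        (∀ x ≤ b, g x = 1 + ∫ t in x..b, kappa ζ (t - x) * (V t : ℂ) * g t) →
        Set.EqOn g f (Set.Iic b)) := by
  classical
  set w : ℝ → ℝ := fun t => |V t| with hwdef
  have hwint : Integrable w := hV.abs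
  have hw0 : ∀ t, 0 ≤ w t := fun t => abs_nonneg _
  set F : ℝ → ℝ := fun x => ∫ t in x..b, w t with hFdef
  set W : ℝ := ∫ t, w t with hWdef
  set p : ℕ → ℝ → ℂ := picard ζ V b with hpdef
  have hpbound : ∀ (n : ℕ) {x : ℝ}, x ≤ b → ‖p n x‖ ≤ ((b - x) * F x) ^ n / n ! :=
    fun n {x} hx => picard_norm_le ζ hζ hV b n hx
  have hpcont : ∀ n, ContinuousOn (p n) (Set.Iic b) := picard_contOn ζ hζ hV b
  have hFnonneg : ∀ {x : ℝ}, x ≤ b → 0 ≤ F x := fun {x} hx => F_nonneg hw0 hx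
  have hsumnorm : ∀ {x : ℝ}, x ≤ b → Summable (fun n => ‖p n x‖) := by
    intro x hx
    exact Summable.of_nonneg_of_le (fun n => norm_nonneg _) (fun n => hpbound n hx)
      (Real.summable_pow_div_factorial ((b - x) * F x))
  have hsum : ∀ {x : ℝ}, x ≤ b → Summable (fun n => p n x) :=
    fun {x} hx => (hsumnorm hx).of_norm
  set f : ℝ → ℂ := fun x => ∑' n, p n x with hfdef
  -- continuity
  have hfcont : ContinuousOn f (Set.Iic b) := by
    intro x₀ hx₀
    have hx₀' : x₀ ≤ b := hx₀
    set c := x₀ - 1 with hc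
    have hcb : c ≤ b := by simp only [hc]; linarith
    have hIcc : ContinuousOn f (Set.Icc c b) := by
      apply continuousOn_tsum (fun n => (hpcont n).mono (Set.Icc_subset_Iic_self))
        (Real.summable_pow_div_factorial ((b - c) * W))
      intro n x hx
      refine le_trans (hpbound n hx.2) ?_
      have h1 : 0 ≤ (b - x) * F x := mul_nonneg (by linarith [hx.2]) (hFnonneg hx.2)
      have h2 : (b - x) * F x ≤ (b - c) * W := by
        have hFW : F x ≤ W := F_le_total hwint hw0 hx.2
        have : b - x ≤ b - c := by linarith [hx.1]
        apply mul_le_mul this hFW (hFnonneg hx.2) (by linarith)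
      have hfac : (0:ℝ) < n ! := by positivity
      exact (div_le_div_iff_of_pos_right hfac).mpr (pow_le_pow_left₀ h1 h2 n)
    have hmem : Set.Icc c b ∈ nhdsWithin x₀ (Set.Iic b) := by
      apply Filter.mem_of_superset
        (Filter.inter_mem self_mem_nhdsWithin
          (mem_nhdsWithin_of_mem_nhds (Ioi_mem_nhds (show c < x₀ by simp [hc]))))
      exact fun y hy => ⟨hy.2.le, hy.1⟩
    exact (hIcc.continuousWithinAt ⟨by linarith, hx₀⟩).mono_of_mem_nhdsWithin hmem
  -- integrability of integrands
  have hInt : ∀ {h : ℝ → ℂ}, ContinuousOn h (Set.Iic b) → ∀ {x : ℝ}, x ≤ b →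
      IntervalIntegrable (fun t => kappa ζ (t - x) * (V t : ℂ) * h t) volume x b := by
    intro h hh x hx
    apply intble_gen hV ((kappa_cont ζ).comp (by continuity))
    refine hh.mono ?_
    rw [Set.uIcc_of_le hx]
    exact fun t ht => ht.2
  -- the integral equation
  have heqf : ∀ x ≤ b, f x = 1 + ∫ t in x..b, kappa ζ (t - x) * (V t : ℂ) * f t := by
    intro x hx
    have hshift : f x = 1 + ∑' n, p (n+1) x := by
      rw [hfdef]
      simp only []
      rw [Summable.tsum_eq_zero_add (hsum hx)]
      rfl
    rw [hshift]
    congr 1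
    have hgn : ∀ n, IntervalIntegrable (fun t => kappa ζ (t - x) * (V t : ℂ) * p n t)
        volume x b := fun n => hInt (hpcont n) hx
    have hμ : ∀ n, IntegrableOn (fun t => kappa ζ (t - x) * (V t : ℂ) * p n t)
        (Set.Ioc x b) := fun n => ((hgn n).1)
    -- each term
    have hterm : ∀ n, p (n+1) x = ∫ t in Set.Ioc x b, kappa ζ (t - x) * (V t : ℂ) * p n t := by
      intro n
      show (∫ t in x..b, kappa ζ (t - x) * (V t : ℂ) * p n t) = _
      rw [intervalIntegral.integral_of_le hx]
    -- lintegral bound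
    have hFmono : ∀ {t : ℝ}, x ≤ t → F t ≤ F x := fun {t} hxt => F_le hwint hw0 hxt
    have hKb : ∀ n t, t ∈ Set.Icc x b →
        ‖kappa ζ (t - x) * (V t : ℂ) * p n t‖
          ≤ ((b - x) * (((b - x) * F x) ^ n / n !)) * w t := by
      intro n t ht
      have hVt : ‖(V t : ℂ)‖ = w t := by rw [Complex.norm_real]; rfl
      have hk : ‖kappa ζ (t - x)‖ ≤ b - x :=
        le_trans (kappa_norm_le ζ hζ (by linarith [ht.1])) (by linarith [ht.2])
      have hfac : (0:ℝ) < n ! := by positivity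
      have hp1 : ‖p n t‖ ≤ ((b - x) * F x) ^ n / n ! := by
        refine le_trans (hpbound n ht.2) ?_
        have h1 : 0 ≤ (b - t) * F t := mul_nonneg (by linarith [ht.2]) (hFnonneg ht.2)
        have h2 : (b - t) * F t ≤ (b - x) * F x :=
          mul_le_mul (by linarith [ht.1]) (hFmono ht.1) (hFnonneg ht.2) (by linarith [ht.2])
        exact (div_le_div_iff_of_pos_right hfac).mpr (pow_le_pow_left₀ h1 h2 n)
      calc ‖kappa ζ (t - x) * (V t : ℂ) * p n t‖
          = ‖kappa ζ (t - x)‖ * w t * ‖p n t‖ := by rw [norm_mul, norm_mul, hVt]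
        _ ≤ (b - x) * w t * (((b - x) * F x) ^ n / n !) := by
            apply mul_le_mul (mul_le_mul hk le_rfl (hw0 t) (by linarith [hx])) hp1
              (norm_nonneg _) (mul_nonneg (by linarith) (hw0 t))
        _ = ((b - x) * (((b - x) * F x) ^ n / n !)) * w t := by ring
    have hlint : ∀ n, (∫⁻ t in Set.Ioc x b, ‖kappa ζ (t - x) * (V t : ℂ) * p n t‖₊)
        ≤ ENNReal.ofReal (((b - x) * (((b - x) * F x) ^ n / n !)) * F x) := by
      intro n
      refine (le_of_eq (ofReal_integral_norm_eq_lintegral_enorm (hμ n)).symm).trans ?_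
      apply ENNReal.ofReal_le_ofReal
      have h1 : (∫ t in Set.Ioc x b, ‖kappa ζ (t - x) * (V t : ℂ) * p n t‖)
          = ∫ t in x..b, ‖kappa ζ (t - x) * (V t : ℂ) * p n t‖ := by
        rw [intervalIntegral.integral_of_le hx]
      rw [h1]
      have h2 : (∫ t in x..b, ‖kappa ζ (t - x) * (V t : ℂ) * p n t‖)
          ≤ ∫ t in x..b, ((b - x) * (((b - x) * F x) ^ n / n !)) * w t := by
        apply intervalIntegral.integral_mono_on hx (hgn n).norm
          ((hwint.intervalIntegrable).const_mul _) (hKb n)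
      refine le_trans h2 ?_
      rw [intervalIntegral.integral_const_mul]
    have hsummc : Summable (fun n : ℕ => ((b - x) * (((b - x) * F x) ^ n / n !)) * F x) := by
      have := (Real.summable_pow_div_factorial ((b - x) * F x)).mul_left (b - x)
      exact this.mul_right (F x)
    have hcnonneg : ∀ n : ℕ, 0 ≤ ((b - x) * (((b - x) * F x) ^ n / n !)) * F x := by
      intro n
      have h1 : 0 ≤ (b - x) * F x := mul_nonneg (by linarith) (hFnonneg hx)
      have : (0:ℝ) ≤ ((b - x) * F x) ^ n / n ! := by positivity
      exact mul_nonneg (mul_nonneg (by linarith) this) (hFnonneg hx)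
    have hne : (∑' n, ∫⁻ t in Set.Ioc x b, ‖kappa ζ (t - x) * (V t : ℂ) * p n t‖₊) ≠ ⊤ := by
      refine ne_of_lt (lt_of_le_of_lt (ENNReal.tsum_le_tsum hlint) ?_)
      rw [← ENNReal.ofReal_tsum_of_nonneg hcnonneg hsummc]
      exact ENNReal.ofReal_lt_top
    have hswap := MeasureTheory.integral_tsum
      (f := fun n t => kappa ζ (t - x) * (V t : ℂ) * p n t)
      (μ := volume.restrict (Set.Ioc x b))
      (fun n => (hμ n).aestronglyMeasurable) hne
    calc ∑' n, p (n+1) x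
        = ∑' n, ∫ t in Set.Ioc x b, kappa ζ (t - x) * (V t : ℂ) * p n t := by
          exact tsum_congr hterm
      _ = ∫ t in Set.Ioc x b, ∑' n, kappa ζ (t - x) * (V t : ℂ) * p n t := hswap.symm
      _ = ∫ t in Set.Ioc x b, kappa ζ (t - x) * (V t : ℂ) * f t := by
          apply setIntegral_congr_fun measurableSet_Ioc
          intro t _
          exact tsum_mul_left
      _ = ∫ t in x..b, kappa ζ (t - x) * (V t : ℂ) * f t := by
          rw [intervalIntegral.integral_of_le hx]
  -- the bound
  have hfbound : ∀ x ≤ b, ‖f x‖ ≤ Real.exp ((b - x) * F x) := by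
    intro x hx
    refine le_trans (norm_tsum_le_tsum_norm (hsumnorm hx)) ?_
    have h1 : ∑' n, ‖p n x‖ ≤ ∑' n : ℕ, ((b - x) * F x) ^ n / n ! :=
      Summable.tsum_le_tsum (fun n => hpbound n hx) (hsumnorm hx)
        (Real.summable_pow_div_factorial _)
    refine le_trans h1 (le_of_eq ?_)
    rw [Real.exp_eq_exp_ℝ, NormedSpace.exp_eq_tsum_div]
  -- uniqueness
  refine ⟨f, ⟨hfcont, heqf⟩, hfbound, ?_⟩
  intro g hgcont hgeq x hx
  set h : ℝ → ℂ := fun y => g y - f y with hhdef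
  have hhcont : ContinuousOn h (Set.Iic b) := hgcont.sub hfcont
  have hheq : ∀ y ≤ b, h y = ∫ t in y..b, kappa ζ (t - y) * (V t : ℂ) * h t := by
    intro y hy
    have h1 := hgeq y hy
    have h2 := heqf y hy
    have hIf := hInt hfcont hy
    have hIg := hInt hgcont hy
    have : h y = (∫ t in y..b, kappa ζ (t - y) * (V t : ℂ) * g t)
        - ∫ t in y..b, kappa ζ (t - y) * (V t : ℂ) * f t := by
      rw [hhdef]; simp only []; rw [h1, h2]; ring
    rw [this, ← intervalIntegral.integral_sub hIg hIf]
    apply intervalIntegral.integral_congr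
    intro t _
    simp only [hhdef]
    ring
  obtain ⟨C, hC⟩ := isCompact_Icc.exists_bound_of_continuousOn
    (hhcont.mono (Set.Icc_subset_Iic_self (a := a)))
  set C0 : ℝ := max C 0 with hC0
  have hC0' : ∀ y ∈ Set.Icc a b, ‖h y‖ ≤ C0 := fun y hy =>
    le_trans (hC y hy) (le_max_left _ _)
  have hkey2 : ∀ n, ∀ y ∈ Set.Icc a b, ‖h y‖ ≤ C0 * (((b - a) * F y) ^ n / n !) := by
    intro n
    induction n with
    | zero =>
      intro y hy
      simpa using hC0' y hy
    | succ n IH =>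
      intro y hy
      have hy2 : y ≤ b := hy.2
      have hIh := hInt hhcont hy2
      rw [hheq y hy2]
      refine le_trans (intervalIntegral.norm_integral_le_integral_norm hy2) ?_
      have hmono : (∫ t in y..b, ‖kappa ζ (t - y) * (V t : ℂ) * h t‖)
          ≤ ∫ t in y..b, (C0 * (b - a) ^ (n+1) / n !) * (w t * F t ^ n) := by
        apply intervalIntegral.integral_mono_on hy2 hIh.norm
          ((wFn_integrable hwint n y b).const_mul _)
        intro t ht
        have ht1 : y ≤ t := ht.1
        have ht2 : t ≤ b := ht.2
        have hta : a ≤ t := le_trans hy.1 ht1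
        have hVt : ‖(V t : ℂ)‖ = w t := by rw [Complex.norm_real]; rfl
        have hk : ‖kappa ζ (t - y)‖ ≤ b - a :=
          le_trans (kappa_norm_le ζ hζ (by linarith)) (by linarith [hy.1])
        have hfac : (0:ℝ) < n ! := by positivity
        have hFt : 0 ≤ F t := hFnonneg ht2
        have hh1 : ‖h t‖ ≤ C0 * (((b - a) * F t) ^ n / n !) := IH t ⟨hta, ht2⟩
        calc ‖kappa ζ (t - y) * (V t : ℂ) * h t‖
            = ‖kappa ζ (t - y)‖ * w t * ‖h t‖ := by rw [norm_mul, norm_mul, hVt]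
          _ ≤ (b - a) * w t * (C0 * (((b - a) * F t) ^ n / n !)) := by
              apply mul_le_mul (mul_le_mul hk le_rfl (hw0 t) (by linarith [hab.le])) hh1
                (norm_nonneg _) (mul_nonneg (by linarith [hab.le]) (hw0 t))
          _ = (C0 * (b - a) ^ (n+1) / n !) * (w t * F t ^ n) := by
              rw [mul_pow]
              field_simp
              ring
      refine le_trans hmono ?_
      rw [intervalIntegral.integral_const_mul, key_identity hwint n y hy2]
      apply le_of_eq
      rw [mul_pow, Nat.factorial_succ]
      push_cast
      have h1 : (0:ℝ) < n ! := by positivity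
      have h2 : (0:ℝ) < (n:ℝ) + 1 := by positivity
      field_simp
      ring
  have hzero : ∀ y ∈ Set.Icc a b, h y = 0 := by
    intro y hy
    have hlim : Filter.Tendsto (fun n : ℕ => C0 * (((b - a) * F y) ^ n / n !))
        Filter.atTop (nhds 0) := by
      have := (FloorSemiring.tendsto_pow_div_factorial_atTop ((b - a) * F y)).const_mul C0
      simpa using this
    have hle : ‖h y‖ ≤ 0 :=
      ge_of_tendsto hlim (Filter.Eventually.of_forall (fun n => hkey2 n y hy))
    simpa using le_antisymm hle (norm_nonneg _)
  have hx0 : h x = 0 := by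
    rw [hheq x hx]
    rw [show (0:ℂ) = ∫ _ in x..b, (0:ℂ) by simp]
    apply intervalIntegral.integral_congr
    intro t ht
    rw [Set.uIcc_of_le hx] at ht
    show kappa ζ (t - x) * (V t : ℂ) * h t = 0
    by_cases hta : a ≤ t
    · rw [hzero t ⟨hta, ht.2⟩]
      simp
    · rw [hVsupp t (by simp [Set.mem_Icc]; intro h'; exact absurd h' hta)]
      simp
  exact sub_eq_zero.mp hx0
end

section
/- Assume in addition that V(x) ≥ 0 for a.e. x. Then the unique continuous solution b(·,0) : (−∞,b] → ℂ of the Jost integral equation at ζ = 0, i.e. of b(x) = 1 + ∫_x^b (t − x)·V(t)·b(t) dt, is real-valued and satisfies b(x,0) ≥ 1 for every x ≤ b. -/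
open MeasureTheory intervalIntegral

lemma helperR {W : ℝ → ℝ} (hW : Integrable W) {φ : ℝ → ℝ} {c d : ℝ}
    (hφ : ContinuousOn φ (Set.Icc c d)) :
    IntegrableOn (fun t => W t * φ t) (Set.Ioc c d) := by
  rcases isCompact_Icc.exists_bound_of_continuousOn hφ with ⟨C, hC⟩
  refine Integrable.mono' ((hW.abs.mul_const C).restrict) ?_ ?_
  · exact hW.1.restrict.mul
      ((hφ.mono Set.Ioc_subset_Icc_self).aestronglyMeasurable measurableSet_Ioc)
  · rw [ae_restrict_iff' measurableSet_Ioc]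
    filter_upwards with t ht
    have h1 : ‖W t * φ t‖ = |W t| * |φ t| := abs_mul _ _
    rw [h1]
    exact mul_le_mul_of_nonneg_left (by simpa using hC t (Set.Ioc_subset_Icc_self ht))
      (abs_nonneg _)

/-- A Grönwall-type uniqueness lemma for the Volterra inequality. -/
lemma gronwall {a b K : ℝ} (hK : 0 ≤ K) {V u : ℝ → ℝ}
    (hV : Integrable V)
    (hu : ContinuousOn u (Set.Icc a b))
    (hunn : ∀ x ∈ Set.Icc a b, 0 ≤ u x)
    (hub : ∀ x ∈ Set.Icc a b, u x ≤ K * ∫ t in x..b, V t * u t) :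
    ∀ x ∈ Set.Icc a b, u x = 0 := by
  have hbcase : ∀ x ∈ Set.Icc a b, x = b → u x = 0 := by
    intro x hx hxb
    have h0 := hub x hx
    rw [hxb] at h0 ⊢
    simp only [intervalIntegral.integral_same, mul_zero] at h0
    exact le_antisymm h0 (hunn b (hxb ▸ hx))
  rcases le_or_gt b a with hba | hab
  · intro x hx
    exact hbcase x hx (le_antisymm hx.2 (hba.trans hx.1))
  have hab' : a ≤ b := hab.le
  set ε : ℝ := (2 * (K + 1))⁻¹ with hεdef
  have hεpos : 0 < ε := by positivity
  have hKε : K * ε ≤ 1 / 2 := by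
    rw [hεdef, ← div_eq_mul_inv, div_le_iff₀ (by positivity)]
    linarith
  have hεne : ENNReal.ofReal ε ≠ 0 := by
    simp [ENNReal.ofReal_eq_zero, not_le, hεpos]
  obtain ⟨δ, hδpos, hδ⟩ :=
    exists_pos_setLIntegral_lt_of_measure_lt (μ := volume)
      (f := fun t => ‖V t‖₊) hV.2.ne hεne
  obtain ⟨r, hr0, hrδ⟩ := ENNReal.lt_iff_exists_nnreal_btwn.mp hδpos
  have hr0' : (0:ℝ) < r := by exact_mod_cast hr0
  have huVint : IntegrableOn (fun t => V t * u t) (Set.Ioc a b) := helperR hV hu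
  -- key smallness estimate
  have key : ∀ c d : ℝ, a ≤ c → c ≤ d → d ≤ b → d - c ≤ (r:ℝ) →
      ∀ M : ℝ, 0 ≤ M → (∀ y ∈ Set.Ioc c d, u y ≤ M) →
      (∫ t in c..d, V t * u t) ≤ M * ε := by
    intro c d hac hcd hdb hdcr M hM hMu
    have hsub : Set.Ioc c d ⊆ Set.Icc a b := fun t ht =>
      ⟨hac.trans ht.1.le, ht.2.trans hdb⟩
    have hmeas : volume (Set.Ioc c d) < δ := by
      rw [Real.volume_Ioc]
      exact lt_of_le_of_lt (by simpa [ENNReal.ofReal_coe_nnreal] using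
        ENNReal.ofReal_le_ofReal hdcr) hrδ
    have hlint := hδ _ hmeas
    have hVabs : (∫ t in Set.Ioc c d, |V t|) ≤ ε := by
      have heq : (∫ t in Set.Ioc c d, |V t|)
          = (∫⁻ t in Set.Ioc c d, ‖V t‖₊).toReal := by
        have := MeasureTheory.integral_norm_eq_lintegral_enorm
          (μ := volume.restrict (Set.Ioc c d)) (f := V) hV.1.restrict
        simpa [Real.norm_eq_abs, enorm_eq_nnnorm] using this
      rw [heq]
      calc (∫⁻ t in Set.Ioc c d, ‖V t‖₊).toReal
          ≤ (ENNReal.ofReal ε).toReal :=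
            ENNReal.toReal_mono ENNReal.ofReal_ne_top hlint.le
        _ = ε := ENNReal.toReal_ofReal hεpos.le
    rw [intervalIntegral.integral_of_le hcd]
    calc (∫ t in Set.Ioc c d, V t * u t)
        ≤ ∫ t in Set.Ioc c d, |V t| * M := by
          refine setIntegral_mono_on (huVint.mono_set (Set.Ioc_subset_Ioc hac hdb))
            ((hV.abs.mul_const M).restrict) measurableSet_Ioc ?_
          intro t ht
          calc V t * u t ≤ |V t| * u t :=
                mul_le_mul_of_nonneg_right (le_abs_self _) (hunn t (hsub ht))
            _ ≤ |V t| * M :=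
                mul_le_mul_of_nonneg_left (hMu t ht) (abs_nonneg _)
      _ = (∫ t in Set.Ioc c d, |V t|) * M := by rw [MeasureTheory.integral_mul_const]
      _ ≤ ε * M := mul_le_mul_of_nonneg_right hVabs hM
      _ = M * ε := mul_comm _ _
  -- induction on strips of width `r`
  have main : ∀ n : ℕ, ∀ x ∈ Set.Icc a b, b - n * r ≤ x → u x = 0 := by
    intro n
    induction n with
    | zero =>
      intro x hx hxn
      exact hbcase x hx (le_antisymm hx.2 (by simpa using hxn))
    | succ n ih =>
      set c : ℝ := max a (b - (n + 1) * r) with hc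
      have hnr : (0:ℝ) ≤ n * r := by positivity
      have hcb : c ≤ b := max_le hab' (by nlinarith [hr0'.le])
      have hJ : Set.Icc c b ⊆ Set.Icc a b := Set.Icc_subset_Icc (le_max_left _ _) le_rfl
      obtain ⟨z, hz, hzmax⟩ := isCompact_Icc.exists_isMaxOn (Set.nonempty_Icc.2 hcb)
        (hu.mono hJ)
      set M : ℝ := u z with hMdef
      have hM0 : 0 ≤ M := hunn z (hJ hz)
      have hbound : ∀ x ∈ Set.Icc c b, u x ≤ M / 2 := by
        intro x hx
        have hxab : x ∈ Set.Icc a b := hJ hx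
        rcases le_or_gt (b - n * r) x with hcase | hcase
        · rw [ih x hxab hcase]; positivity
        · set d : ℝ := b - n * r with hd
          have hxd : x ≤ d := hcase.le
          have hdb : d ≤ b := by linarith
          have had : a ≤ x := hxab.1
          have hint1 : IntervalIntegrable (fun t => V t * u t) volume x d :=
            (intervalIntegrable_iff_integrableOn_Ioc_of_le hxd).mpr
              (huVint.mono_set (Set.Ioc_subset_Ioc had hdb))
          have hint2 : IntervalIntegrable (fun t => V t * u t) volume d b :=
            (intervalIntegrable_iff_integrableOn_Ioc_of_le hdb).mpr
              (huVint.mono_set (Set.Ioc_subset_Ioc (had.trans hxd) le_rfl))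
          have hsplit : (∫ t in x..b, V t * u t)
              = (∫ t in x..d, V t * u t) + ∫ t in d..b, V t * u t :=
            (intervalIntegral.integral_add_adjacent_intervals hint1 hint2).symm
          have hzero : (∫ t in d..b, V t * u t) = 0 := by
            have : Set.EqOn (fun t => V t * u t) (fun _ => (0:ℝ)) (Set.uIcc d b) := by
              intro t ht
              rw [Set.uIcc_of_le hdb] at ht
              have htab : t ∈ Set.Icc a b := ⟨(had.trans hxd).trans ht.1, ht.2⟩
              simp [ih t htab ht.1]
            rw [intervalIntegral.integral_congr this, intervalIntegral.integral_const,
              smul_zero]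
          have hxc : c ≤ x := hx.1
          have hdxr : d - x ≤ (r:ℝ) := by
            have : b - (n + 1) * r ≤ x := le_trans (le_max_right _ _) hxc
            push_cast
            push_cast at this
            nlinarith
          have hMu : ∀ y ∈ Set.Ioc x d, u y ≤ M := by
            intro y hy
            exact hzmax ⟨hxc.trans hy.1.le, hy.2.trans hdb⟩
          have hkey := key x d had hxd hdb hdxr M hM0 hMu
          have := hub x hxab
          rw [hsplit, hzero, add_zero] at this
          calc u x ≤ K * ∫ t in x..d, V t * u t := this
            _ ≤ K * (M * ε) := by
                refine mul_le_mul_of_nonneg_left hkey hK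
            _ = (K * ε) * M := by ring
            _ ≤ (1/2) * M := mul_le_mul_of_nonneg_right hKε hM0
            _ = M / 2 := by ring
      have hMle : M ≤ M / 2 := hbound z hz
      have hM0' : M = 0 := le_antisymm (by linarith) hM0
      intro x hx hxn
      have hxn' : b - ((n:ℝ) + 1) * (r:ℝ) ≤ x := by push_cast at hxn; linarith
      have hxJ : x ∈ Set.Icc c b := ⟨max_le hx.1 hxn', hx.2⟩
      exact le_antisymm ((hzmax hxJ).trans_eq hM0') (hunn x hx)
  intro x hx
  obtain ⟨n, hn⟩ := exists_nat_ge ((b - a) / r)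
  refine main n x hx ?_
  have : b - a ≤ n * r := by
    rw [div_le_iff₀ hr0'] at hn
    linarith
  linarith [hx.1]
/-- If moreover `V ≥ 0` a.e., then the (unique) continuous
solution of the zero-energy Jost integral equation
`f(x) = 1 + ∫_x^b (t − x) V(t) f(t) dt` on `(−∞, b]` is real-valued and
satisfies `f(x) ≥ 1` for every `x ≤ b`. -/
theorem statement6
    (a b : ℝ) (hab : a < b)
    (V : ℝ → ℝ) (hV : Integrable V)
    (hVsupp : ∀ x, x ∉ Set.Icc a b → V x = 0)
    (hVpos : ∀ᵐ x : ℝ, 0 ≤ V x)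
    (f : ℝ → ℂ)
    (hfcont : ContinuousOn f (Set.Iic b))
    (hfeq : ∀ x ≤ b, f x = 1 + ∫ t in x..b, ((t : ℂ) - (x : ℂ)) * (V t : ℂ) * f t) :
    ∀ x ≤ b, (f x).im = 0 ∧ 1 ≤ (f x).re := by
  set g : ℝ → ℝ := fun x => (f x).im with hgdef
  set h : ℝ → ℝ := fun x => (f x).re with hhdef
  have hgcont : ContinuousOn g (Set.Iic b) := Complex.continuous_im.comp_continuousOn hfcont
  have hhcont : ContinuousOn h (Set.Iic b) := Complex.continuous_re.comp_continuousOn hfcont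
  have hba : (0:ℝ) ≤ b - a := by linarith
  -- integrability of products with V
  have mk : ∀ (φ : ℝ → ℝ), ContinuousOn φ (Set.Iic b) → ∀ x ≤ b,
      IntervalIntegrable (fun t => (t - x) * V t * φ t) volume x b := by
    intro φ hφ x hx
    rw [intervalIntegrable_iff_integrableOn_Ioc_of_le hx]
    have h1 : IntegrableOn (fun t => V t * ((t - x) * φ t)) (Set.Ioc x b) :=
      helperR hV (((continuous_id.sub continuous_const).continuousOn).mul
        (hφ.mono Set.Icc_subset_Iic_self))
    have heq : (fun t => (t - x) * V t * φ t) = fun t => V t * ((t - x) * φ t) :=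
      funext fun t => by ring
    rw [heq]; exact h1
  have mkabs : ∀ (φ : ℝ → ℝ), ContinuousOn φ (Set.Iic b) → ∀ x ≤ b,
      IntervalIntegrable (fun t => (b - a) * (|V t| * φ t)) volume x b := by
    intro φ hφ x hx
    rw [intervalIntegrable_iff_integrableOn_Ioc_of_le hx]
    exact (helperR hV.abs (hφ.mono Set.Icc_subset_Iic_self)).const_mul (b - a)
  -- integrability of the complex integrand
  have hFint : ∀ x ≤ b, IntegrableOn (fun t : ℝ => ((t:ℂ) - (x:ℂ)) * (V t : ℂ) * f t)
      (Set.Ioc x b) := by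
    intro x hx
    have hφ : ContinuousOn (fun t : ℝ => ((t:ℂ) - (x:ℂ)) * f t) (Set.Icc x b) :=
      ((Complex.continuous_ofReal.continuousOn.sub continuousOn_const).mul
        (hfcont.mono Set.Icc_subset_Iic_self))
    rcases isCompact_Icc.exists_bound_of_continuousOn hφ with ⟨C, hC⟩
    refine Integrable.mono' ((hV.abs.mul_const C).restrict) ?_ ?_
    · have : AEStronglyMeasurable (fun t : ℝ => ((t:ℂ) - (x:ℂ)) * f t)
          (volume.restrict (Set.Ioc x b)) :=
        (hφ.mono Set.Ioc_subset_Icc_self).aestronglyMeasurable measurableSet_Ioc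
      have hVm : AEStronglyMeasurable (fun t : ℝ => (V t : ℂ))
          (volume.restrict (Set.Ioc x b)) :=
        Complex.continuous_ofReal.comp_aestronglyMeasurable hV.1.restrict
      have := this.mul hVm
      refine this.congr (Filter.Eventually.of_forall fun t => ?_)
      simp only [Pi.mul_apply]
      ring
    · rw [ae_restrict_iff' measurableSet_Ioc]
      filter_upwards with t ht
      have : ‖((t:ℂ) - (x:ℂ)) * (V t:ℂ) * f t‖ = ‖((t:ℂ) - (x:ℂ)) * f t‖ * |V t| := by
        rw [show ((t:ℂ) - (x:ℂ)) * (V t:ℂ) * f t = (((t:ℂ) - (x:ℂ)) * f t) * (V t:ℂ) by ring,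
          norm_mul, Complex.norm_real, Real.norm_eq_abs]
      rw [this]
      exact (mul_le_mul_of_nonneg_right (hC t (Set.Ioc_subset_Icc_self ht)) (abs_nonneg _)).trans
        (le_of_eq (mul_comm _ _))
  -- the real and imaginary integral equations
  have him : ∀ x ≤ b, g x = ∫ t in x..b, (t - x) * V t * g t := by
    intro x hx
    simp only [hgdef]
    have h1 := congrArg Complex.im (hfeq x hx)
    rw [Complex.add_im, Complex.one_im, intervalIntegral.integral_of_le hx, zero_add] at h1
    have h2 : (∫ t in Set.Ioc x b, ((t:ℂ) - (x:ℂ)) * (V t:ℂ) * f t).im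
        = ∫ t in Set.Ioc x b, (((t:ℂ) - (x:ℂ)) * (V t:ℂ) * f t).im := by
      rw [← RCLike.im_eq_complex_im, ← integral_im (hFint x hx)]
    rw [h2] at h1
    rw [intervalIntegral.integral_of_le hx, h1]
    refine setIntegral_congr_fun measurableSet_Ioc fun t _ => ?_
    have : ((t:ℂ) - (x:ℂ)) * (V t:ℂ) * f t = ((((t - x) * V t : ℝ)):ℂ) * f t := by
      push_cast; ring
    rw [this]
    simp [Complex.mul_im]
  have hre : ∀ x ≤ b, h x = 1 + ∫ t in x..b, (t - x) * V t * h t := by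
    intro x hx
    simp only [hhdef]
    have h1 := congrArg Complex.re (hfeq x hx)
    rw [Complex.add_re, Complex.one_re, intervalIntegral.integral_of_le hx] at h1
    have h2 : (∫ t in Set.Ioc x b, ((t:ℂ) - (x:ℂ)) * (V t:ℂ) * f t).re
        = ∫ t in Set.Ioc x b, (((t:ℂ) - (x:ℂ)) * (V t:ℂ) * f t).re := by
      rw [← RCLike.re_eq_complex_re, ← integral_re (hFint x hx)]
    rw [h2] at h1
    rw [intervalIntegral.integral_of_le hx, h1]
    congr 1
    refine setIntegral_congr_fun measurableSet_Ioc fun t _ => ?_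
    have : ((t:ℂ) - (x:ℂ)) * (V t:ℂ) * f t = ((((t - x) * V t : ℝ)):ℂ) * f t := by
      push_cast; ring
    rw [this]
    simp [Complex.mul_re]
  -- Step A : imaginary part vanishes on [a,b]
  have hg0 : ∀ t ∈ Set.Icc a b, g t = 0 := by
    have hub : ∀ x ∈ Set.Icc a b, |g x| ≤ (b - a) * ∫ t in x..b, |V t| * |g t| := by
      intro x hx
      calc |g x| = |∫ t in x..b, (t - x) * V t * g t| := by rw [him x hx.2]
        _ ≤ ∫ t in x..b, |(t - x) * V t * g t| :=
            intervalIntegral.abs_integral_le_integral_abs hx.2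
        _ ≤ ∫ t in x..b, (b - a) * (|V t| * |g t|) := by
            refine intervalIntegral.integral_mono_on hx.2 ((mk g hgcont x hx.2).abs)
              (mkabs (fun t => |g t|) (hgcont.abs) x hx.2) fun t ht => ?_
            rw [abs_mul, abs_mul, abs_of_nonneg (by linarith [ht.1] : (0:ℝ) ≤ t - x)]
            have h1 : t - x ≤ b - a := by have := ht.2; have := hx.1; linarith
            calc (t - x) * |V t| * |g t| = (t - x) * (|V t| * |g t|) := by ring
              _ ≤ (b - a) * (|V t| * |g t|) :=
                  mul_le_mul_of_nonneg_right h1 (by positivity)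
        _ = (b - a) * ∫ t in x..b, |V t| * |g t| := by
            rw [intervalIntegral.integral_const_mul]
    have hmain := gronwall (a := a) (b := b) hba (V := fun t => |V t|)
      (u := fun t => |g t|) hV.abs ((hgcont.mono Set.Icc_subset_Iic_self).abs)
      (fun x _ => abs_nonneg _) hub
    intro t ht
    exact abs_eq_zero.mp (hmain t ht)
  -- imaginary part vanishes everywhere below b
  have hgzero : ∀ x ≤ b, g x = 0 := by
    intro x hx
    have hz : ∀ t : ℝ, (t - x) * V t * g t = 0 := by
      intro t
      by_cases ht : t ∈ Set.Icc a b
      · rw [hg0 t ht, mul_zero]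
      · rw [hVsupp t ht, mul_zero, zero_mul]
    rw [him x hx]
    simp only [hz]
    simp
  -- Step B : real part ≥ 1 on [a,b]
  have hh1 : ∀ t ∈ Set.Icc a b, 1 ≤ h t := by
    set u : ℝ → ℝ := fun x => max (1 - h x) 0 with hudef
    have hucont : ContinuousOn u (Set.Icc a b) :=
      (continuous_id'.max continuous_const).comp_continuousOn
        (continuousOn_const.sub (hhcont.mono Set.Icc_subset_Iic_self))
    have hub : ∀ x ∈ Set.Icc a b, u x ≤ (b - a) * ∫ t in x..b, |V t| * u t := by
      intro x hx
      have hIB : IntervalIntegrable (fun t => (t - x) * V t) volume x b := by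
        have := mk (fun _ => (1:ℝ)) continuousOn_const x hx.2
        simpa using this
      have hIA : IntervalIntegrable (fun t => (t - x) * V t * (1 - h t)) volume x b :=
        mk (fun t => 1 - h t) (continuousOn_const.sub hhcont) x hx.2
      have hIC : IntervalIntegrable (fun t => (t - x) * V t * h t) volume x b :=
        mk h hhcont x hx.2
      have e1 : 1 - h x = (∫ t in x..b, (t - x) * V t * (1 - h t))
          - ∫ t in x..b, (t - x) * V t := by
        have e2 : (∫ t in x..b, (t - x) * V t * (1 - h t))
            = (∫ t in x..b, (t - x) * V t) - ∫ t in x..b, (t - x) * V t * h t := by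
          rw [← intervalIntegral.integral_sub hIB hIC]
          refine intervalIntegral.integral_congr fun t _ => ?_
          ring
        rw [e2, hre x hx.2]
        ring
      have e3 : (0:ℝ) ≤ ∫ t in x..b, (t - x) * V t := by
        refine intervalIntegral.integral_nonneg_of_ae_restrict hx.2 ?_
        filter_upwards [ae_restrict_of_ae hVpos, ae_restrict_mem measurableSet_Icc] with t h1 h2
        exact mul_nonneg (by linarith [h2.1]) h1
      have e4 : (∫ t in x..b, (t - x) * V t * (1 - h t))
          ≤ ∫ t in x..b, (b - a) * (|V t| * u t) := by
        refine intervalIntegral.integral_mono_ae_restrict hx.2 hIA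
          (mkabs u ((continuous_id'.max continuous_const).comp_continuousOn (continuousOn_const.sub hhcont)) x hx.2) ?_
        filter_upwards [ae_restrict_of_ae hVpos, ae_restrict_mem measurableSet_Icc] with t h1 h2
        have htx : (0:ℝ) ≤ t - x := by linarith [h2.1]
        have htb : t - x ≤ b - a := by have := h2.2; have := hx.1; linarith
        calc (t - x) * V t * (1 - h t) ≤ (t - x) * V t * u t :=
              mul_le_mul_of_nonneg_left (le_max_left _ _) (mul_nonneg htx h1)
          _ ≤ (b - a) * |V t| * u t := by
              refine mul_le_mul_of_nonneg_right ?_ (le_max_right _ _)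
              exact mul_le_mul htb (le_abs_self _) h1 hba
          _ = (b - a) * (|V t| * u t) := by ring
      have e5 : (0:ℝ) ≤ (b - a) * ∫ t in x..b, |V t| * u t := by
        refine mul_nonneg hba (intervalIntegral.integral_nonneg hx.2 fun t _ => ?_)
        exact mul_nonneg (abs_nonneg _) (le_max_right _ _)
      refine max_le ?_ ?_
      · calc 1 - h x ≤ ∫ t in x..b, (t - x) * V t * (1 - h t) := by
              rw [e1]; linarith
          _ ≤ ∫ t in x..b, (b - a) * (|V t| * u t) := e4
          _ = (b - a) * ∫ t in x..b, |V t| * u t := by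
              rw [intervalIntegral.integral_const_mul]
      · exact e5
    have hmain := gronwall (a := a) (b := b) hba (V := fun t => |V t|) (u := u)
      hV.abs hucont (fun x _ => le_max_right _ _) hub
    intro t ht
    have h0 := hmain t ht
    have h1 : 1 - h t ≤ 0 := by
      by_contra hcon
      push_neg at hcon
      rw [hudef] at h0
      simp only [max_eq_left hcon.le] at h0
      linarith
    linarith
  -- conclusion
  intro x hx
  refine ⟨hgzero x hx, ?_⟩
  have hnn : (0:ℝ) ≤ ∫ t in x..b, (t - x) * V t * h t := by
    refine intervalIntegral.integral_nonneg_of_ae_restrict hx ?_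
    filter_upwards [ae_restrict_of_ae hVpos, ae_restrict_mem measurableSet_Icc] with t h1 h2
    by_cases ht : t ∈ Set.Icc a b
    · have := hh1 t ht
      exact mul_nonneg (mul_nonneg (by linarith [h2.1]) h1) (by linarith)
    · simp [hVsupp t ht]
  have h1le : (1:ℝ) ≤ h x := by rw [hre x hx]; linarith
  exact h1le
end

section
/- Assume in addition that V(x) ≥ 0 for a.e. x and ∫_a^b V(t) dt > 0, and let b(·,0) be the unique continuous solution of the Jost integral equation at ζ = 0. Then the zero-energy Jost function w(0) = ∫_a^b V(t)·b(t,0) dt satisfies w(0) ≥ ∫_a^b V(t) dt > 0; in particular w(0) ≠ 0. -/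
open MeasureTheory intervalIntegral

/-- Auxiliary integrability: product of an integrable function with a function
continuous on `Icc x b` is integrable on `Ioc x b` (real version). -/
private lemma auxR {V : ℝ → ℝ} (hV : Integrable V) {g : ℝ → ℝ} {x b : ℝ}
    (hg : ContinuousOn g (Set.Icc x b)) :
    IntegrableOn (fun t => g t * V t) (Set.Ioc x b) := by
  obtain ⟨C, hC⟩ := (isCompact_Icc (a := x) (b := b)).exists_bound_of_continuousOn hg
  refine Integrable.bdd_mul (c := C) hV.integrableOn
    ((hg.mono Set.Ioc_subset_Icc_self).aestronglyMeasurable measurableSet_Ioc) ?_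
  filter_upwards [ae_restrict_mem measurableSet_Ioc] with t ht
  exact hC t (Set.Ioc_subset_Icc_self ht)

/-- Auxiliary integrability, complex version. -/
private lemma auxC {V : ℝ → ℝ} (hV : Integrable V) {g : ℝ → ℂ} {x b : ℝ}
    (hg : ContinuousOn g (Set.Icc x b)) :
    IntegrableOn (fun t => g t * (V t : ℂ)) (Set.Ioc x b) := by
  obtain ⟨C, hC⟩ := (isCompact_Icc (a := x) (b := b)).exists_bound_of_continuousOn hg
  refine Integrable.bdd_mul (c := C) (hV.ofReal.integrableOn)
    ((hg.mono Set.Ioc_subset_Icc_self).aestronglyMeasurable measurableSet_Ioc) ?_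
  filter_upwards [ae_restrict_mem measurableSet_Ioc] with t ht
  exact hC t (Set.Ioc_subset_Icc_self ht)

/-- A continuous function dominated by a homogeneous Volterra bound vanishes. -/
private lemma vanish_aux {a b : ℝ} (hab : a ≤ b) {W v : ℝ → ℝ}
    (hW : Integrable W) (hW0 : ∀ t, 0 ≤ W t)
    (hv : ContinuousOn v (Set.Icc a b))
    (hWv : ∀ x ∈ Set.Icc a b, IntegrableOn (fun t => W t * |v t|) (Set.Ioc x b))
    (hbd : ∀ x ∈ Set.Icc a b, |v x| ≤ ∫ t in Set.Ioc x b, W t * |v t|) :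
    ∀ x ∈ Set.Icc a b, v x = 0 := by
  set S : Set ℝ := {x ∈ Set.Icc a b | ∀ t ∈ Set.Icc x b, v t = 0} with hS
  have hbmem : b ∈ Set.Icc a b := ⟨hab, le_rfl⟩
  have hvb : v b = 0 := by
    have h := hbd b hbmem
    simp only [Set.Ioc_self, Measure.restrict_empty, integral_zero_measure] at h
    exact abs_eq_zero.mp (le_antisymm h (abs_nonneg _))
  have hbS : b ∈ S := ⟨hbmem, fun t ht => by
    have : t = b := le_antisymm ht.2 ht.1
    rw [this]; exact hvb⟩
  have hSne : S.Nonempty := ⟨b, hbS⟩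
  have hSbdd : BddBelow S := ⟨a, fun y hy => hy.1.1⟩
  set c := sInf S with hc
  have hac : a ≤ c := le_csInf hSne fun y hy => hy.1.1
  have hcb : c ≤ b := csInf_le hSbdd hbS
  -- v vanishes on [c, b]
  have hvcb : ∀ t ∈ Set.Icc c b, v t = 0 := by
    intro t ht
    rcases eq_or_lt_of_le ht.1 with h | h
    · -- t = c : use the integral bound
      have hcmem : c ∈ Set.Icc a b := ⟨hac, hcb⟩
      have hzero : ∀ s ∈ Set.Ioc c b, W s * |v s| = 0 := by
        intro s hs
        obtain ⟨y, hyS, hyl⟩ := exists_lt_of_csInf_lt hSne hs.1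
        rw [hyS.2 s ⟨hyl.le, hs.2⟩]; simp
      have h0 : (∫ s in Set.Ioc c b, W s * |v s|) = 0 := by
        rw [setIntegral_congr_fun (g := fun _ => (0:ℝ)) measurableSet_Ioc hzero]; simp
      have := hbd c hcmem
      rw [h0] at this
      rw [← h]
      exact abs_eq_zero.mp (le_antisymm this (abs_nonneg _))
    · obtain ⟨y, hyS, hyl⟩ := exists_lt_of_csInf_lt hSne h
      exact hyS.2 t ⟨hyl.le, ht.2⟩
  -- show c = a by contradiction
  rcases eq_or_lt_of_le hac with hca | hca
  · intro x hx
    exact hvcb x ⟨hca ▸ hx.1, hx.2⟩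
  · exfalso
    -- continuity of the primitive
    have hF : Continuous fun r => ∫ t in r..c, W t := by
      have h1 : Continuous fun r => ∫ t in c..r, W t :=
        intervalIntegral.continuous_primitive (fun _ _ => hW.intervalIntegrable) c
      have : (fun r => ∫ t in r..c, W t) = fun r => -∫ t in c..r, W t := by
        funext r; rw [intervalIntegral.integral_symm]
      rw [this]; exact h1.neg
    have hFc : (∫ t in c..c, W t) = 0 := intervalIntegral.integral_same
    obtain ⟨δ, hδ, hδb⟩ := Metric.continuousAt_iff.mp hF.continuousAt (1/2) (by norm_num)
    set x₀ := max a (c - δ/2) with hx₀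
    have hax₀ : a ≤ x₀ := le_max_left _ _
    have hx₀c : x₀ < c := max_lt hca (by linarith)
    have hx₀b : x₀ ≤ b := hx₀c.le.trans hcb
    have hsmall : ∀ x ∈ Set.Icc x₀ c, (∫ t in Set.Ioc x c, W t) < 1/2 := by
      intro x hx
      have hd : dist x c < δ := by
        rw [Real.dist_eq, abs_of_nonpos (by linarith [hx.2])]
        have : c - δ/2 ≤ x₀ := le_max_right _ _
        linarith [hx.1]
      have := hδb hd
      rw [Real.dist_eq, hFc, sub_zero] at this
      have heq : (∫ t in x..c, W t) = ∫ t in Set.Ioc x c, W t :=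
        intervalIntegral.integral_of_le hx.2
      calc (∫ t in Set.Ioc x c, W t) = ∫ t in x..c, W t := heq.symm
        _ ≤ |∫ t in x..c, W t| := le_abs_self _
        _ < 1/2 := this
    -- sup of |v| on [x₀, c]
    have hvIcc : ContinuousOn (fun t => |v t|) (Set.Icc x₀ c) :=
      (hv.mono (Set.Icc_subset_Icc hax₀ hcb)).abs
    obtain ⟨t₀, ht₀mem, ht₀max⟩ := isCompact_Icc.exists_isMaxOn
      (Set.nonempty_Icc.mpr hx₀c.le) hvIcc
    set m := |v t₀| with hm
    have hm0 : 0 ≤ m := abs_nonneg _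
    have key : ∀ x ∈ Set.Icc x₀ c, |v x| ≤ m/2 := by
      intro x hx
      have hxab : x ∈ Set.Icc a b := ⟨hax₀.trans hx.1, hx.2.trans hcb⟩
      have hsplit : (∫ t in Set.Ioc x b, W t * |v t|)
          = (∫ t in Set.Ioc x c, W t * |v t|) + ∫ t in Set.Ioc c b, W t * |v t| := by
        rw [← setIntegral_union (Set.Ioc_disjoint_Ioc_of_le le_rfl) measurableSet_Ioc
          ((hWv x hxab).mono_set (Set.Ioc_subset_Ioc_right hcb))
          ((hWv x hxab).mono_set (Set.Ioc_subset_Ioc_left hx.2)),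
          Set.Ioc_union_Ioc_eq_Ioc hx.2 hcb]
      have hzero2 : (∫ t in Set.Ioc c b, W t * |v t|) = 0 := by
        rw [setIntegral_congr_fun (g := fun _ => (0:ℝ)) measurableSet_Ioc (fun s hs => by
          rw [hvcb s ⟨hs.1.le, hs.2⟩]; simp)]
        simp
      have hmono : (∫ t in Set.Ioc x c, W t * |v t|) ≤ ∫ t in Set.Ioc x c, W t * m := by
        refine setIntegral_mono_ae_restrict
          (((hWv x hxab).mono_set (Set.Ioc_subset_Ioc_right hcb)))
          ((hW.mul_const m).integrableOn) ?_
        filter_upwards [ae_restrict_mem measurableSet_Ioc] with t ht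
        exact mul_le_mul_of_nonneg_left
          (ht₀max ⟨hx.1.trans ht.1.le, ht.2⟩) (hW0 t)
      have hconst : (∫ t in Set.Ioc x c, W t * m) = (∫ t in Set.Ioc x c, W t) * m :=
        integral_mul_const m W
      calc |v x| ≤ ∫ t in Set.Ioc x b, W t * |v t| := hbd x hxab
        _ = (∫ t in Set.Ioc x c, W t * |v t|) + 0 := by rw [hsplit, hzero2]
        _ = ∫ t in Set.Ioc x c, W t * |v t| := by ring
        _ ≤ (∫ t in Set.Ioc x c, W t) * m := by rw [← hconst]; exact hmono
        _ ≤ (1/2) * m := mul_le_mul_of_nonneg_right (hsmall x hx).le hm0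
        _ = m/2 := by ring
    have hm_half : m ≤ m/2 := key t₀ ht₀mem
    have hmeq : m = 0 := le_antisymm (by linarith) hm0
    have hvzero : ∀ t ∈ Set.Icc x₀ c, v t = 0 := by
      intro t ht
      have h2 : |v t| ≤ m := ht₀max ht
      rw [hmeq] at h2
      exact abs_eq_zero.mp (le_antisymm h2 (abs_nonneg _))
    have hx₀S : x₀ ∈ S := by
      refine ⟨⟨hax₀, hx₀b⟩, fun t ht => ?_⟩
      rcases le_or_gt t c with h | h
      · exact hvzero t ⟨ht.1, h⟩
      · exact hvcb t ⟨h.le, ht.2⟩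
    exact absurd (csInf_le hSbdd hx₀S) (not_le.mpr hx₀c)

/-- If moreover `V ≥ 0` a.e. and `∫_a^b V > 0`, then the
zero-energy Jost function `w(0) = ∫_a^b V(t) f(t) dt`, where `f = b(·,0)` is the
continuous solution of the zero-energy Jost integral equation, is real and
satisfies `w(0) ≥ ∫_a^b V > 0`; in particular `w(0) ≠ 0`. -/
theorem statement7
    (a b : ℝ) (hab : a < b)
    (V : ℝ → ℝ) (hV : Integrable V)
    (hVsupp : ∀ x, x ∉ Set.Icc a b → V x = 0)
    (hVpos : ∀ᵐ x : ℝ, 0 ≤ V x)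
    (hVint : 0 < ∫ t in a..b, V t)
    (f : ℝ → ℂ)
    (hfcont : ContinuousOn f (Set.Iic b))
    (hfeq : ∀ x ≤ b, f x = 1 + ∫ t in x..b, ((t : ℂ) - (x : ℂ)) * (V t : ℂ) * f t)
    (w₀ : ℂ) (hw₀ : w₀ = ∫ t in a..b, (V t : ℂ) * f t) :
    w₀.im = 0 ∧ (∫ t in a..b, V t) ≤ w₀.re ∧ w₀ ≠ 0 := by
  have hab' : a ≤ b := hab.le
  set u : ℝ → ℝ := fun t => (f t).re with hu_def
  set v : ℝ → ℝ := fun t => (f t).im with hv_def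
  have hucont : ContinuousOn u (Set.Iic b) := Complex.continuous_re.comp_continuousOn hfcont
  have hvcont : ContinuousOn v (Set.Iic b) := Complex.continuous_im.comp_continuousOn hfcont
  -- integrability of the complex integrand
  have hFint : ∀ x : ℝ, x ≤ b → IntegrableOn (fun t : ℝ => ((t : ℂ) - (x : ℂ)) * (V t : ℂ) * f t)
      (Set.Ioc x b) := by
    intro x hx
    have hg : ContinuousOn (fun t : ℝ => ((t : ℂ) - (x : ℂ)) * f t) (Set.Icc x b) :=
      ((Complex.continuous_ofReal.continuousOn).sub continuousOn_const).mul
        (hfcont.mono (fun t ht => ht.2))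
    refine (auxC hV hg).congr_fun (fun t ht => ?_) measurableSet_Ioc
    show ((t : ℂ) - (x : ℂ)) * f t * (V t : ℂ) = ((t : ℂ) - (x : ℂ)) * (V t : ℂ) * f t
    ring
  -- real and imaginary parts of the Jost equation
  have hre_int : ∀ x ≤ b,
      (∫ t in Set.Ioc x b, ((t : ℂ) - (x : ℂ)) * (V t : ℂ) * f t).re
        = ∫ t in Set.Ioc x b, (t - x) * V t * u t := by
    intro x hx
    have h1 : (∫ t in Set.Ioc x b, ((t : ℂ) - (x : ℂ)) * (V t : ℂ) * f t).re
        = ∫ t in Set.Ioc x b, (((t : ℂ) - (x : ℂ)) * (V t : ℂ) * f t).re :=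
      (integral_re (hFint x hx)).symm
    rw [h1]
    refine integral_congr_ae (Filter.Eventually.of_forall fun t => ?_)
    simp [hu_def, Complex.mul_re, Complex.mul_im]
  have him_int : ∀ x ≤ b,
      (∫ t in Set.Ioc x b, ((t : ℂ) - (x : ℂ)) * (V t : ℂ) * f t).im
        = ∫ t in Set.Ioc x b, (t - x) * V t * v t := by
    intro x hx
    have h1 : (∫ t in Set.Ioc x b, ((t : ℂ) - (x : ℂ)) * (V t : ℂ) * f t).im
        = ∫ t in Set.Ioc x b, (((t : ℂ) - (x : ℂ)) * (V t : ℂ) * f t).im :=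
      (integral_im (hFint x hx)).symm
    rw [h1]
    refine integral_congr_ae (Filter.Eventually.of_forall fun t => ?_)
    simp [hv_def, Complex.mul_re, Complex.mul_im]
  have hfeq' : ∀ x ≤ b, f x = 1 + ∫ t in Set.Ioc x b, ((t : ℂ) - (x : ℂ)) * (V t : ℂ) * f t := by
    intro x hx
    rw [hfeq x hx, intervalIntegral.integral_of_le hx]
  have hu_eq : ∀ x ≤ b, u x = 1 + ∫ t in Set.Ioc x b, (t - x) * V t * u t := by
    intro x hx
    have := congrArg Complex.re (hfeq' x hx)
    simpa [hu_def, hre_int x hx] using this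
  have hv_eq : ∀ x ≤ b, v x = ∫ t in Set.Ioc x b, (t - x) * V t * v t := by
    intro x hx
    have := congrArg Complex.im (hfeq' x hx)
    simpa [hv_def, him_int x hx] using this
  -- Part A: v = 0 on [a, b]
  set W : ℝ → ℝ := fun t => (b - a) * |V t| with hW_def
  have hWint : Integrable W := (hV.abs.const_mul (b - a))
  have hW0 : ∀ t, 0 ≤ W t := fun t => mul_nonneg (by linarith) (abs_nonneg _)
  have hWv_int : ∀ x ∈ Set.Icc a b, IntegrableOn (fun t => W t * |v t|) (Set.Ioc x b) := by
    intro x hx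
    have hg : ContinuousOn (fun t => (b - a) * |v t|) (Set.Icc x b) :=
      (continuousOn_const.mul ((hvcont.mono (fun t ht => ht.2)).abs))
    exact (auxR hV.abs hg).congr_fun (fun t _ => by rw [hW_def]; ring) measurableSet_Ioc
  have hv_bd : ∀ x ∈ Set.Icc a b, |v x| ≤ ∫ t in Set.Ioc x b, W t * |v t| := by
    intro x hx
    have hvint : IntegrableOn (fun t => (t - x) * V t * v t) (Set.Ioc x b) := by
      have hg : ContinuousOn (fun t => (t - x) * v t) (Set.Icc x b) :=
        ((continuousOn_id.sub continuousOn_const).mul (hvcont.mono (fun t ht => ht.2)))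
      exact (auxR hV hg).congr_fun (fun t _ => by ring) measurableSet_Ioc
    rw [hv_eq x hx.2]
    have habs : IntegrableOn (fun t => |t - x| * |V t| * |v t|) (Set.Ioc x b) := by
      have h4 : IntegrableOn (fun t => |(t - x) * V t * v t|) (Set.Ioc x b) := hvint.abs
      refine h4.congr_fun (fun t ht => ?_) measurableSet_Ioc
      show |(t - x) * V t * v t| = |t - x| * |V t| * |v t|
      rw [abs_mul, abs_mul]
    calc |∫ t in Set.Ioc x b, (t - x) * V t * v t|
        ≤ ∫ t in Set.Ioc x b, |t - x| * |V t| * |v t| := by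
          simpa [Real.norm_eq_abs, abs_mul] using
            MeasureTheory.norm_integral_le_integral_norm
              (μ := volume.restrict (Set.Ioc x b)) (fun t => (t - x) * V t * v t)
      _ ≤ ∫ t in Set.Ioc x b, W t * |v t| := by
          refine setIntegral_mono_ae_restrict habs (hWv_int x hx) ?_
          filter_upwards [ae_restrict_mem measurableSet_Ioc] with t ht
          rw [hW_def]
          have h1 : |t - x| ≤ b - a := by
            rw [abs_of_nonneg (by linarith [ht.1.le])]
            have := ht.2; have := hx.1; linarith [ht.1.le]
          exact mul_le_mul_of_nonneg_right
            (mul_le_mul_of_nonneg_right h1 (abs_nonneg _)) (abs_nonneg _)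
  have hv0 : ∀ x ∈ Set.Icc a b, v x = 0 :=
    vanish_aux hab' hWint hW0 (hvcont.mono (fun t ht => ht.2)) hWv_int hv_bd
  -- Part B: u ≥ 1 on [a, b]
  have hu_ge : ∀ x ∈ Set.Icc a b, 1 ≤ u x := by
    set S : Set ℝ := {x ∈ Set.Icc a b | ∀ t ∈ Set.Icc x b, 0 ≤ u t} with hS
    have hub : u b = 1 := by
      have := hu_eq b le_rfl
      simpa using this
    have hbS : b ∈ S := ⟨⟨hab', le_rfl⟩, fun t ht => by
      have : t = b := le_antisymm ht.2 ht.1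
      rw [this, hub]; norm_num⟩
    have hSne : S.Nonempty := ⟨b, hbS⟩
    have hSbdd : BddBelow S := ⟨a, fun y hy => hy.1.1⟩
    set c := sInf S with hc
    have hac : a ≤ c := le_csInf hSne fun y hy => hy.1.1
    have hcb : c ≤ b := csInf_le hSbdd hbS
    -- u ≥ 1 on [c, b]
    have hucb : ∀ x ∈ Set.Icc c b, 1 ≤ u x := by
      intro x hx
      have hint_nonneg : 0 ≤ ∫ t in Set.Ioc x b, (t - x) * V t * u t := by
        refine setIntegral_nonneg_of_ae_restrict ?_
        filter_upwards [ae_restrict_mem measurableSet_Ioc, ae_restrict_of_ae hVpos]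
          with t ht hVt
        have htu : 0 ≤ u t := by
          obtain ⟨y, hyS, hyl⟩ := exists_lt_of_csInf_lt hSne (lt_of_le_of_lt hx.1 ht.1)
          exact hyS.2 t ⟨hyl.le, ht.2⟩
        have : (0:ℝ) ≤ t - x := by linarith [ht.1.le]
        positivity
      rw [hu_eq x hx.2]
      linarith
    rcases eq_or_lt_of_le hac with hca | hca
    · intro x hx
      exact hucb x ⟨hca ▸ hx.1, hx.2⟩
    · exfalso
      have hcmem : c ∈ Set.Icc a b := ⟨hac, hcb⟩
      have huC : ContinuousWithinAt u (Set.Icc a b) c :=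
        (hucont.mono (fun t ht => ht.2)).continuousWithinAt hcmem
      have huc1 : (0:ℝ) < u c := lt_of_lt_of_le one_pos (hucb c ⟨le_rfl, hcb⟩)
      have hev : ∀ᶠ t in nhdsWithin c (Set.Icc a b), 0 < u t :=
        huC (Ioi_mem_nhds huc1)
      obtain ⟨δ, hδ, hδb⟩ := Metric.mem_nhdsWithin_iff.mp hev
      set x₀ := max a (c - δ/2) with hx₀
      have hax₀ : a ≤ x₀ := le_max_left _ _
      have hx₀c : x₀ < c := max_lt hca (by linarith)
      have hx₀b : x₀ ≤ b := hx₀c.le.trans hcb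
      have hx₀S : x₀ ∈ S := by
        refine ⟨⟨hax₀, hx₀b⟩, fun t ht => ?_⟩
        rcases le_or_gt c t with h | h
        · linarith [hucb t ⟨h, ht.2⟩]
        · have htb : t ∈ Metric.ball c δ ∩ Set.Icc a b := by
            constructor
            · rw [Metric.mem_ball, Real.dist_eq, abs_of_nonpos (by linarith)]
              have : c - δ/2 ≤ x₀ := le_max_right _ _
              linarith [ht.1]
            · exact ⟨hax₀.trans ht.1, ht.2⟩
          exact (hδb htb).le
      exact absurd (csInf_le hSbdd hx₀S) (not_le.mpr hx₀c)
  -- Part C: conclusion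
  have hVf_int : IntegrableOn (fun t => (V t : ℂ) * f t) (Set.Ioc a b) := by
    refine (auxC hV (hfcont.mono (fun t (ht : t ∈ Set.Icc a b) => ht.2))).congr_fun
      (fun t ht => ?_) measurableSet_Ioc
    show f t * (V t : ℂ) = (V t : ℂ) * f t
    ring
  have hw₀' : w₀ = ∫ t in Set.Ioc a b, (V t : ℂ) * f t := by
    rw [hw₀, intervalIntegral.integral_of_le hab']
  have him0 : w₀.im = ∫ t in Set.Ioc a b, ((V t : ℂ) * f t).im := by
    rw [hw₀']; exact (integral_im hVf_int).symm
  have hre0 : w₀.re = ∫ t in Set.Ioc a b, ((V t : ℂ) * f t).re := by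
    rw [hw₀']; exact (integral_re hVf_int).symm
  have him : w₀.im = 0 := by
    rw [him0, setIntegral_congr_fun (g := fun _ => (0:ℝ)) measurableSet_Ioc (fun t ht => by
      simp only [Complex.mul_im, Complex.ofReal_re, Complex.ofReal_im]
      have h3 := hv0 t ⟨ht.1.le, ht.2⟩
      simp only [hv_def] at h3
      rw [h3]; ring)]
    simp
  have hre : w₀.re = ∫ t in Set.Ioc a b, V t * u t := by
    rw [hre0]
    refine integral_congr_ae (Filter.Eventually.of_forall fun t => ?_)
    simp [hu_def, Complex.mul_re]
  have hVu_int : IntegrableOn (fun t => V t * u t) (Set.Ioc a b) := by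
    refine (auxR hV (hucont.mono (fun t (ht : t ∈ Set.Icc a b) => ht.2))).congr_fun
      (fun t ht => ?_) measurableSet_Ioc
    show u t * V t = V t * u t
    ring
  have hmono : (∫ t in Set.Ioc a b, V t) ≤ ∫ t in Set.Ioc a b, V t * u t := by
    refine setIntegral_mono_ae_restrict hV.integrableOn hVu_int ?_
    filter_upwards [ae_restrict_mem measurableSet_Ioc, ae_restrict_of_ae hVpos]
      with t ht hVt
    have h1 : 1 ≤ u t := hu_ge t ⟨ht.1.le, ht.2⟩
    nlinarith
  have hVeq : (∫ t in a..b, V t) = ∫ t in Set.Ioc a b, V t :=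
    intervalIntegral.integral_of_le hab'
  refine ⟨him, ?_, ?_⟩
  · rw [hre, hVeq]; exact hmono
  · intro h
    rw [h] at hre
    have h5 : (0:ℝ) < ∫ t in Set.Ioc a b, V t := hVeq ▸ hVint
    simp only [Complex.zero_re] at hre
    rw [← hre] at hmono
    linarith
end

section
/- Let a < b be real numbers, let V : ℝ → ℝ be Lebesgue integrable and vanish outside [a,b], and let k ∈ ℝ. Suppose u : ℝ → ℂ is continuously differentiable, u′ is locally absolutely continuous, −u″(x) + V(x)·u(x) = k²·u(x) for almost every x ∈ ℝ, and u(x) = e^{ikx} for all x ≥ b. Set w = −e^{−ika}·(u′(a) + i·k·u(a)) and w₀ = −e^{−ika}·(conj(u′(a)) + i·k·conj(u(a))). Then |w|² = 4k² + |w₀|²; in particular |w| ≥ 2|k|. -/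
open MeasureTheory intervalIntegral

/-- Integration by parts where `f'` is only absolutely continuous (given by an
integral representation with density `f''`) and `g` is `C¹`. -/
lemma parts_ac (a c : ℝ) (hac : a ≤ c) (f' f'' g g' : ℝ → ℂ)
    (hf' : Continuous f')
    (hf'' : IntegrableOn f'' (Set.Icc a c))
    (hFTC : ∀ x y : ℝ, f' y - f' x = ∫ t in x..y, f'' t)
    (hg : ∀ x, HasDerivAt g (g' x) x) (hg' : Continuous g') :
    ∫ t in a..c, f'' t * g t
      = f' c * g c - f' a * g a - ∫ t in a..c, f' t * g' t := by
  have hgc : Continuous g := by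
    rw [continuous_iff_continuousAt]; exact fun x => (hg x).continuousAt
  have hf''Ioc : IntegrableOn f'' (Set.Ioc a c) := hf''.mono_set Set.Ioc_subset_Icc_self
  have hg'Ioc : IntegrableOn g' (Set.Ioc a c) :=
    (hg'.integrableOn_Icc).mono_set Set.Ioc_subset_Icc_self
  -- FTC for g on subintervals
  have hgFTC : ∀ x y : ℝ, x ≤ y → (∫ s in Set.Ioc x y, g' s) = g y - g x := by
    intro x y hxy
    have h1 : ∫ s in x..y, g' s = g y - g x :=
      intervalIntegral.integral_eq_sub_of_hasDerivAt (fun s _ => hg s)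
        (hg'.intervalIntegrable x y)
    rwa [intervalIntegral.integral_of_le hxy] at h1
  have hfFTC : ∀ x y : ℝ, x ≤ y → (∫ s in Set.Ioc x y, f'' s) = f' y - f' x := by
    intro x y hxy
    have h1 := (hFTC x y).symm
    rwa [intervalIntegral.integral_of_le hxy] at h1
  set F : ℝ × ℝ → ℂ := fun p => Set.indicator {q : ℝ × ℝ | q.1 < q.2}
    (fun q => f'' q.1 * g' q.2) p with hF
  have hFint : Integrable F
      ((volume.restrict (Set.Ioc a c)).prod (volume.restrict (Set.Ioc a c))) := by
    have h1 : Integrable (fun p : ℝ × ℝ => f'' p.1 * g' p.2)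
        ((volume.restrict (Set.Ioc a c)).prod (volume.restrict (Set.Ioc a c))) :=
      Integrable.mul_prod hf''Ioc hg'Ioc
    exact h1.indicator (measurableSet_lt measurable_fst measurable_snd)
  have swap := MeasureTheory.integral_integral_swap (f := fun t s => F (t, s))
    (μ := volume.restrict (Set.Ioc a c)) (ν := volume.restrict (Set.Ioc a c)) hFint
  -- compute the inner integral on the left side
  have hinner1 : ∀ t ∈ Set.Ioc a c,
      (∫ s in Set.Ioc a c, F (t, s)) = f'' t * (g c - g t) := by
    intro t ht
    have h2 : (fun s => F (t, s)) = Set.indicator (Set.Ioi t) (fun s => f'' t * g' s) := by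
      funext s
      simp [hF, Set.indicator_apply, Set.mem_Ioi]
    rw [h2, MeasureTheory.integral_indicator measurableSet_Ioi,
      Measure.restrict_restrict measurableSet_Ioi]
    have h3 : Set.Ioi t ∩ Set.Ioc a c = Set.Ioc t c := by
      ext s
      simp only [Set.mem_inter_iff, Set.mem_Ioi, Set.mem_Ioc]
      constructor
      · rintro ⟨h4, _, h6⟩; exact ⟨h4, h6⟩
      · rintro ⟨h4, h5⟩; exact ⟨h4, lt_trans ht.1 h4, h5⟩
    rw [h3, MeasureTheory.integral_const_mul, hgFTC t c ht.2]
  have hinner2 : ∀ s ∈ Set.Ioc a c,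
      (∫ t in Set.Ioc a c, F (t, s)) = (f' s - f' a) * g' s := by
    intro s hs
    have h2 : (fun t => F (t, s)) = Set.indicator (Set.Iio s) (fun t => f'' t * g' s) := by
      funext t
      simp [hF, Set.indicator_apply, Set.mem_Iio]
    rw [h2, MeasureTheory.integral_indicator measurableSet_Iio,
      Measure.restrict_restrict measurableSet_Iio]
    have h3 : Set.Iio s ∩ Set.Ioc a c = Set.Ioo a s := by
      ext t
      simp only [Set.mem_inter_iff, Set.mem_Iio, Set.mem_Ioc, Set.mem_Ioo]
      constructor
      · rintro ⟨h4, h5, _⟩; exact ⟨h5, h4⟩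
      · rintro ⟨h4, h5⟩; exact ⟨h5, h4, le_trans h5.le hs.2⟩
    rw [h3, MeasureTheory.integral_mul_const, ← MeasureTheory.integral_Ioc_eq_integral_Ioo,
      hfFTC a s hs.1.le]
  have hL : (∫ t in Set.Ioc a c, ∫ s in Set.Ioc a c, F (t, s))
      = ∫ t in Set.Ioc a c, f'' t * (g c - g t) :=
    MeasureTheory.setIntegral_congr_fun measurableSet_Ioc hinner1
  have hR : (∫ s in Set.Ioc a c, ∫ t in Set.Ioc a c, F (t, s))
      = ∫ s in Set.Ioc a c, (f' s - f' a) * g' s :=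
    MeasureTheory.setIntegral_congr_fun measurableSet_Ioc hinner2
  have hfub : (∫ t in Set.Ioc a c, f'' t * (g c - g t))
      = ∫ s in Set.Ioc a c, (f' s - f' a) * g' s := by
    rw [← hL, ← hR]; exact swap
  -- put everything together
  have hbig : IntegrableOn (fun t => f'' t * (g c - g t)) (Set.Ioc a c) :=
    (hf''.mul_continuousOn ((continuous_const.sub hgc).continuousOn)
      isCompact_Icc).mono_set Set.Ioc_subset_Icc_self
  have hsplit : (∫ t in Set.Ioc a c, f'' t * g t)
      = (∫ t in Set.Ioc a c, f'' t * g c) - ∫ t in Set.Ioc a c, f'' t * (g c - g t) := by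
    rw [← MeasureTheory.integral_sub (hf''Ioc.mul_const (g c)) hbig]
    congr 1; funext t; ring
  have hc1 : (∫ t in Set.Ioc a c, f'' t * g c) = (f' c - f' a) * g c := by
    rw [MeasureTheory.integral_mul_const, hfFTC a c hac]
  have hc2 : (∫ s in Set.Ioc a c, (f' s - f' a) * g' s)
      = (∫ s in Set.Ioc a c, f' s * g' s) - f' a * (g c - g a) := by
    have h4 : (∫ s in Set.Ioc a c, (f' s - f' a) * g' s)
        = (∫ s in Set.Ioc a c, f' s * g' s) - ∫ s in Set.Ioc a c, f' a * g' s := by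
      rw [← MeasureTheory.integral_sub (f := fun s => f' s * g' s)
        (((hf'.mul hg').integrableOn_Icc).mono_set Set.Ioc_subset_Icc_self)
        (hg'Ioc.const_mul (f' a))]
      congr 1; funext s; ring
    rw [h4, MeasureTheory.integral_const_mul, hgFTC a c hac]
  rw [intervalIntegral.integral_of_le hac, intervalIntegral.integral_of_le hac,
    hsplit, hfub, hc1, hc2]
  ring

/-- For a solution `u` of `−u″ + Vu = k²u` (a.e., with `u`
of class `C¹` and `u′` locally absolutely continuous) equal to `e^{ikx}` for
`x ≥ b`, the Wronskians `w = −e^{−ika}(u′(a) + ik u(a))` and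
`w₀ = −e^{−ika}(conj(u′(a)) + ik conj(u(a)))` satisfy `|w|² = 4k² + |w₀|²`;
in particular `|w| ≥ 2|k|`. -/
theorem statement10
    (a b : ℝ) (hab : a < b)
    (V : ℝ → ℝ) (hV : Integrable V)
    (hVsupp : ∀ x, x ∉ Set.Icc a b → V x = 0)
    (k : ℝ)
    (u u' u'' : ℝ → ℂ)
    (hu : ∀ x, HasDerivAt u (u' x) x) (hu'c : Continuous u')
    (hu''li : LocallyIntegrable u'')
    (huFTC : ∀ x y : ℝ, u' y - u' x = ∫ t in x..y, u'' t)
    (hode : ∀ᵐ x : ℝ, -u'' x + (V x : ℂ) * u x = (k : ℂ) ^ 2 * u x)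
    (hext : ∀ x : ℝ, b ≤ x → u x = Complex.exp (Complex.I * k * x))
    (w w₀ : ℂ)
    (hw : w = -(Complex.exp (-(Complex.I * k * a))) * (u' a + Complex.I * k * u a))
    (hw₀ : w₀ = -(Complex.exp (-(Complex.I * k * a)))
        * ((starRingEnd ℂ) (u' a) + Complex.I * k * (starRingEnd ℂ) (u a))) :
    ‖w‖ ^ 2 = 4 * k ^ 2 + ‖w₀‖ ^ 2 ∧
      2 * |k| ≤ ‖w‖ := by
  set c := b + 1 with hc
  have hac : a ≤ c := by linarith
  have hucont : Continuous u := by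
    rw [continuous_iff_continuousAt]; exact fun x => (hu x).continuousAt
  -- derivative of conj u
  have hconju : ∀ x, HasDerivAt (fun y => (starRingEnd ℂ) (u y)) ((starRingEnd ℂ) (u' x)) x := by
    intro x
    exact (hu x).star
  have hconju'c : Continuous (fun y => (starRingEnd ℂ) (u' y)) := continuous_star.comp hu'c
  -- integration by parts
  have P1 : ∫ t in a..c, u'' t * (starRingEnd ℂ) (u t)
      = u' c * (starRingEnd ℂ) (u c) - u' a * (starRingEnd ℂ) (u a)
        - ∫ t in a..c, u' t * (starRingEnd ℂ) (u' t) :=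
    parts_ac a c hac u' u'' (fun y => (starRingEnd ℂ) (u y)) (fun y => (starRingEnd ℂ) (u' y))
      hu'c (hu''li.integrableOn_isCompact isCompact_Icc) huFTC hconju hconju'c
  set I := ∫ t in a..c, u'' t * (starRingEnd ℂ) (u t) with hI
  set J := ∫ t in a..c, u' t * (starRingEnd ℂ) (u' t) with hJ
  -- I is self-conjugate
  have hode' : ∀ᵐ x : ℝ, u'' x = ((V x : ℂ) - (k : ℂ) ^ 2) * u x := by
    filter_upwards [hode] with x hx
    linear_combination -hx
  have hconjInt : ∀ f : ℝ → ℂ, (starRingEnd ℂ) (∫ t in a..c, f t)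
      = ∫ t in a..c, (starRingEnd ℂ) (f t) := by
    intro f
    rw [intervalIntegral.integral_of_le hac, intervalIntegral.integral_of_le hac,
      ← integral_conj]
  have hIconj : (starRingEnd ℂ) I = I := by
    rw [hI, hconjInt]
    apply intervalIntegral.integral_congr_ae
    filter_upwards [hode'] with t ht _
    rw [ht]
    simp only [map_mul, map_sub, Complex.conj_ofReal, map_pow, Complex.conj_conj]
    ring
  have hJconj : (starRingEnd ℂ) J = J := by
    rw [hJ, hconjInt]
    congr 1
    funext t
    simp only [map_mul, Complex.conj_conj]
    ring
  -- value at c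
  have hub : u c = Complex.exp (Complex.I * k * c) := hext c (by linarith)
  have hu'b : u' c = Complex.exp (Complex.I * k * c) * (Complex.I * k) := by
    have h0 : HasDerivAt (fun x : ℝ => (Complex.I * k) * (x : ℂ)) (Complex.I * k) c := by
      simpa using (Complex.ofRealCLM.hasDerivAt (x := c)).const_mul (Complex.I * (k : ℂ))
    have hd : HasDerivAt (fun x : ℝ => Complex.exp (Complex.I * k * x))
        (Complex.exp (Complex.I * k * c) * (Complex.I * k)) c := h0.cexp
    have heq : u =ᶠ[nhds c] fun x : ℝ => Complex.exp (Complex.I * k * x) := by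
      filter_upwards [Ioi_mem_nhds (show b < c by linarith)] with x hx
      exact hext x (le_of_lt hx)
    exact (hu c).unique (hd.congr_of_eventuallyEq heq)
  have hAc : u' c * (starRingEnd ℂ) (u c) = Complex.I * k := by
    rw [hub, hu'b, ← Complex.exp_conj]
    have : (starRingEnd ℂ) (Complex.I * k * c) = -(Complex.I * k * c) := by
      simp [Complex.conj_ofReal]
    rw [this, mul_comm (Complex.exp (Complex.I * k * c)) (Complex.I * (k : ℂ)), mul_assoc,
      ← Complex.exp_add]
    simp
  -- the key Wronskian identity
  have key : u' a * (starRingEnd ℂ) (u a) - (starRingEnd ℂ) (u' a) * u a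
      = 2 * Complex.I * k := by
    have hconjA : (starRingEnd ℂ) (u' a * (starRingEnd ℂ) (u a))
        = (starRingEnd ℂ) (u' a) * u a := by simp [map_mul]
    have hconjAc : (starRingEnd ℂ) (u' c * (starRingEnd ℂ) (u c))
        = -(Complex.I * k) := by rw [hAc]; simp
    have h3 : I = Complex.I * k - u' a * (starRingEnd ℂ) (u a) - J := by rw [P1, hAc]
    have h2 : I = -(Complex.I * k) - (starRingEnd ℂ) (u' a) * u a - J := by
      conv_lhs => rw [← hIconj, P1]
      rw [map_sub, map_sub, hJconj, hconjAc, hconjA]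
    linear_combination h3 - h2
  -- final algebra
  have hEE : Complex.exp (-(Complex.I * k * a)) * Complex.exp (Complex.I * k * a) = 1 := by
    rw [← Complex.exp_add]; simp
  have hconjE : (starRingEnd ℂ) (Complex.exp (-(Complex.I * k * a)))
      = Complex.exp (Complex.I * k * a) := by
    rw [← Complex.exp_conj]
    congr 1
    simp [Complex.conj_ofReal]
  have hmain : w * (starRingEnd ℂ) w - w₀ * (starRingEnd ℂ) w₀ = 4 * (k : ℂ) ^ 2 := by
    rw [hw, hw₀]
    simp only [map_mul, map_neg, map_add, hconjE, Complex.conj_I, Complex.conj_ofReal,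
      Complex.conj_conj]
    set E1 := Complex.exp (-(Complex.I * k * a))
    set E2 := Complex.exp (Complex.I * k * a)
    linear_combination (-2 * Complex.I * (k : ℂ) * (E1 * E2)) * key
      + (-4 * (k : ℂ) ^ 2 * (E1 * E2)) * Complex.I_sq + 4 * (k : ℂ) ^ 2 * hEE
  have hre : Complex.normSq w - Complex.normSq w₀ = 4 * k ^ 2 := by
    have h2 : ((Complex.normSq w - Complex.normSq w₀ : ℝ) : ℂ) = ((4 * k ^ 2 : ℝ) : ℂ) := by
      push_cast
      rw [← Complex.mul_conj, ← Complex.mul_conj]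
      exact hmain
    exact_mod_cast h2
  have h1 : ‖w‖ ^ 2 = 4 * k ^ 2 + ‖w₀‖ ^ 2 := by
    rw [Complex.sq_norm, Complex.sq_norm]
    linarith
  refine ⟨h1, ?_⟩
  nlinarith [norm_nonneg w, abs_nonneg k, sq_abs k,
    sq_nonneg (‖w‖ - 2 * |k|), sq_nonneg (‖w‖ + 2 * |k|),
    norm_nonneg w₀, sq_nonneg ‖w₀‖]
end

section
/- Let a < b be real numbers and let V : ℝ → ℝ be Lebesgue integrable. Let ψ, φ : ℝ → ℂ be compactly supported functions that are twice continuously differentiable on each of the intervals (−∞,a), (a,b), (b,∞), and such that ψ, ψ′, ψ″, φ, φ′, φ″ all extend continuously to the closure of each of these three intervals (so all one-sided limits at a and at b exist). Then ∫_{ℝ∖{a,b}} [ conj(ψ(x))·(−φ″(x) + V(x)·φ(x)) − conj(−ψ″(x) + V(x)·ψ(x))·φ(x) ] dx = ⟨Γ₀ψ, Γ₁φ⟩_{ℂ⁴} − ⟨Γ₁ψ, Γ₀φ⟩_{ℂ⁴}. -/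
open MeasureTheory Filter Matrix

lemma aux_integrableOn {f : ℝ → ℂ} {c d : ℝ} (hcd : c < d)
    (hf : ContinuousOn f (Set.Ioo c d)) {lc ld : ℂ}
    (hc : Tendsto f (nhdsWithin c (Set.Ioi c)) (nhds lc))
    (hd : Tendsto f (nhdsWithin d (Set.Iio d)) (nhds ld)) :
    IntegrableOn f (Set.Ioo c d) := by
  have hg : ContinuousOn (extendFrom (Set.Ioo c d) f) (Set.Icc c d) := by
    apply continuousOn_extendFrom
    · rw [closure_Ioo hcd.ne]
    · intro x hx
      rcases eq_or_ne x c with rfl | hxc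
      · exact ⟨lc, by rwa [nhdsWithin_Ioo_eq_nhdsGT hcd]⟩
      rcases eq_or_ne x d with rfl | hxd
      · exact ⟨ld, by rwa [nhdsWithin_Ioo_eq_nhdsLT hcd]⟩
      · have hx' : x ∈ Set.Ioo c d := ⟨lt_of_le_of_ne hx.1 (Ne.symm hxc), lt_of_le_of_ne hx.2 hxd⟩
        exact ⟨f x, hf x hx'⟩
  have hi : IntegrableOn (extendFrom (Set.Ioo c d) f) (Set.Icc c d) := hg.integrableOn_Icc
  exact (hi.mono_set Set.Ioo_subset_Icc_self).congr_fun
    (fun x hx => (extendFrom_extends hf x hx)) measurableSet_Ioo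

lemma aux_ftc {F G : ℝ → ℂ} {c d : ℝ} (hcd : c < d)
    (hF : ∀ x ∈ Set.Ioo c d, HasDerivAt F (G x) x)
    (hG : ContinuousOn G (Set.Ioo c d)) {lc ld Fc Fd : ℂ}
    (hGc : Tendsto G (nhdsWithin c (Set.Ioi c)) (nhds lc))
    (hGd : Tendsto G (nhdsWithin d (Set.Iio d)) (nhds ld))
    (hFc : Tendsto F (nhdsWithin c (Set.Ioi c)) (nhds Fc))
    (hFd : Tendsto F (nhdsWithin d (Set.Iio d)) (nhds Fd)) :
    ∫ x in Set.Ioo c d, G x = Fd - Fc := by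
  have hint : IntegrableOn G (Set.Ioo c d) := aux_integrableOn hcd hG hGc hGd
  have hii : IntervalIntegrable G volume c d :=
    (intervalIntegrable_iff_integrableOn_Ioo_of_le hcd.le).2 hint
  have h := intervalIntegral.integral_eq_sub_of_hasDerivAt_of_tendsto hcd hF hii hFc hFd
  rwa [intervalIntegral.integral_of_le hcd.le, MeasureTheory.integral_Ioc_eq_integral_Ioo] at h

/-- Green's identity with boundary terms: for compactly
supported functions `ψ, φ` that are twice continuously differentiable off the
points `a < b`, with all one-sided limits of `ψ, ψ′, ψ″, φ, φ′, φ″` at `a` and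
`b`, the symmetric sesquilinear integral of the Schrödinger expressions equals
`⟨Γ₀ψ, Γ₁φ⟩ − ⟨Γ₁ψ, Γ₀φ⟩` in `ℂ⁴`. -/
theorem statement16
    (a b : ℝ) (hab : a < b)
    (V : ℝ → ℝ) (hV : Integrable V)
    (ψ φ : ℝ → ℂ)
    (hψsupp : HasCompactSupport ψ) (hφsupp : HasCompactSupport φ)
    (ψ' ψ'' φ' φ'' : ℝ → ℂ)
    (hψd : ∀ x ∈ ({a, b} : Set ℝ)ᶜ, HasDerivAt ψ (ψ' x) x)
    (hψd2 : ∀ x ∈ ({a, b} : Set ℝ)ᶜ, HasDerivAt ψ' (ψ'' x) x)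
    (hψ''c : ContinuousOn ψ'' ({a, b} : Set ℝ)ᶜ)
    (hφd : ∀ x ∈ ({a, b} : Set ℝ)ᶜ, HasDerivAt φ (φ' x) x)
    (hφd2 : ∀ x ∈ ({a, b} : Set ℝ)ᶜ, HasDerivAt φ' (φ'' x) x)
    (hφ''c : ContinuousOn φ'' ({a, b} : Set ℝ)ᶜ)
    -- one-sided boundary values of ψ and ψ′
    (ψam ψap ψbm ψbp dψam dψap dψbm dψbp : ℂ)
    (hψam : Tendsto ψ (nhdsWithin a (Set.Iio a)) (nhds ψam))
    (hψap : Tendsto ψ (nhdsWithin a (Set.Ioi a)) (nhds ψap))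
    (hψbm : Tendsto ψ (nhdsWithin b (Set.Iio b)) (nhds ψbm))
    (hψbp : Tendsto ψ (nhdsWithin b (Set.Ioi b)) (nhds ψbp))
    (hdψam : Tendsto ψ' (nhdsWithin a (Set.Iio a)) (nhds dψam))
    (hdψap : Tendsto ψ' (nhdsWithin a (Set.Ioi a)) (nhds dψap))
    (hdψbm : Tendsto ψ' (nhdsWithin b (Set.Iio b)) (nhds dψbm))
    (hdψbp : Tendsto ψ' (nhdsWithin b (Set.Ioi b)) (nhds dψbp))
    -- one-sided boundary values of φ and φ′
    (φam φap φbm φbp dφam dφap dφbm dφbp : ℂ)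
    (hφam : Tendsto φ (nhdsWithin a (Set.Iio a)) (nhds φam))
    (hφap : Tendsto φ (nhdsWithin a (Set.Ioi a)) (nhds φap))
    (hφbm : Tendsto φ (nhdsWithin b (Set.Iio b)) (nhds φbm))
    (hφbp : Tendsto φ (nhdsWithin b (Set.Ioi b)) (nhds φbp))
    (hdφam : Tendsto φ' (nhdsWithin a (Set.Iio a)) (nhds dφam))
    (hdφap : Tendsto φ' (nhdsWithin a (Set.Ioi a)) (nhds dφap))
    (hdφbm : Tendsto φ' (nhdsWithin b (Set.Iio b)) (nhds dφbm))
    (hdφbp : Tendsto φ' (nhdsWithin b (Set.Ioi b)) (nhds dφbp))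
    -- the second derivatives also extend continuously (one-sided limits exist)
    (hψ''lim : ∀ α ∈ ({a, b} : Set ℝ), ∀ s ∈ ({Set.Iio α, Set.Ioi α} : Set (Set ℝ)),
      ∃ l : ℂ, Tendsto ψ'' (nhdsWithin α s) (nhds l))
    (hφ''lim : ∀ α ∈ ({a, b} : Set ℝ), ∀ s ∈ ({Set.Iio α, Set.Ioi α} : Set (Set ℝ)),
      ∃ l : ℂ, Tendsto φ'' (nhdsWithin α s) (nhds l)) :
    (∫ x in ({a, b} : Set ℝ)ᶜ,
        ((starRingEnd ℂ) (ψ x) * (-φ'' x + (V x : ℂ) * φ x)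
          - (starRingEnd ℂ) (-ψ'' x + (V x : ℂ) * ψ x) * φ x))
      = star (![dψbm - dψbp, ψbp - ψbm, dψam - dψap, ψap - ψam]) ⬝ᵥ
          ((1 / 2 : ℂ) • ![φbp + φbm, dφbp + dφbm, φap + φam, dφap + dφam])
        - star ((1 / 2 : ℂ) • ![ψbp + ψbm, dψbp + dψbm, ψap + ψam, dψap + dψam]) ⬝ᵥ
          ![dφbm - dφbp, φbp - φbm, dφam - dφap, φap - φam] := by
    classical
  set Ω : Set ℝ := ({a, b} : Set ℝ)ᶜ with hΩdef
  -- the Wronskian-type functions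
  set F : ℝ → ℂ := fun x => star (ψ' x) * φ x - star (ψ x) * φ' x with hFdef
  set G : ℝ → ℂ := fun x => star (ψ'' x) * φ x - star (ψ x) * φ'' x with hGdef
  -- rewrite the integrand
  have hintegrand : ∀ x : ℝ,
      (starRingEnd ℂ) (ψ x) * (-φ'' x + (V x : ℂ) * φ x)
        - (starRingEnd ℂ) (-ψ'' x + (V x : ℂ) * ψ x) * φ x = G x := by
    intro x
    simp only [hGdef, map_add, _root_.map_mul, map_neg, Complex.conj_ofReal]
    simp only [starRingEnd_apply]
    ring
  -- basic facts about Ω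
  have hmemΩ : ∀ x : ℝ, x ≠ a → x ≠ b → x ∈ Ω := by
    intro x h1 h2
    simp [hΩdef, h1, h2]
  have hΩmeas : MeasurableSet Ω := (MeasurableSet.insert (measurableSet_singleton b) a).compl
  -- derivative of F is G on Ω
  have hFderiv : ∀ x ∈ Ω, HasDerivAt F (G x) x := by
    intro x hx
    have h1 : HasDerivAt F
        (star (ψ'' x) * φ x + star (ψ' x) * φ' x
          - (star (ψ' x) * φ' x + star (ψ x) * φ'' x)) x :=
      ((hψd2 x hx).star.mul (hφd x hx)).sub ((hψd x hx).star.mul (hφd2 x hx))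
    convert h1 using 1
    simp only [hGdef]
    ring
  -- continuity of the data on Ω
  have hψcont : ContinuousOn ψ Ω := fun x hx => (hψd x hx).continuousAt.continuousWithinAt
  have hφcont : ContinuousOn φ Ω := fun x hx => (hφd x hx).continuousAt.continuousWithinAt
  have hGcont : ContinuousOn G Ω :=
    ((continuous_star.comp_continuousOn hψ''c).mul hφcont).sub
      ((continuous_star.comp_continuousOn hψcont).mul hφ''c)
  -- compact support
  have hK : IsCompact (tsupport ψ ∪ tsupport φ) := hψsupp.union hφsupp
  obtain ⟨r, hr⟩ := hK.isBounded.subset_closedBall 0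
  have hzero : ∀ x : ℝ, r < |x| → ψ x = 0 ∧ φ x = 0 := by
    intro x hx
    have hxK : x ∉ tsupport ψ ∪ tsupport φ := by
      intro h
      have := hr h
      rw [Metric.mem_closedBall, Real.dist_eq, sub_zero] at this
      exact absurd this (not_le.2 hx)
    exact ⟨image_eq_zero_of_notMem_tsupport (fun h => hxK (Or.inl h)),
      image_eq_zero_of_notMem_tsupport (fun h => hxK (Or.inr h))⟩
  have hF0 : ∀ x : ℝ, r < |x| → F x = 0 := by
    intro x hx; simp [hFdef, (hzero x hx).1, (hzero x hx).2]
  have hG0 : ∀ x : ℝ, r < |x| → G x = 0 := by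
    intro x hx; simp [hGdef, (hzero x hx).1, (hzero x hx).2]
  -- choose outer points
  set c : ℝ := min a (-r) - 1 with hcdef
  set d : ℝ := max b r + 1 with hddef
  have hca : c < a := lt_of_lt_of_le (by linarith [min_le_left a (-r)]) le_rfl
  have hbd : b < d := by
    have := le_max_left b r; linarith
  have hcm : c < min a (-r) := by linarith
  have hdm : max b r < d := by linarith
  have habs_left : ∀ x : ℝ, x < min a (-r) → r < |x| := by
    intro x hx
    have h1 : x < -r := lt_of_lt_of_le hx (min_le_right a (-r))
    have : r < -x := by linarith
    exact lt_of_lt_of_le this (neg_le_abs x)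
  have habs_right : ∀ x : ℝ, max b r < x → r < |x| := by
    intro x hx
    have h1 : r < x := lt_of_le_of_lt (le_max_right b r) hx
    exact lt_of_lt_of_le h1 (le_abs_self x)
  -- limits of F and G at the outer points
  have hGc : Tendsto G (nhdsWithin c (Set.Ioi c)) (nhds 0) := by
    have hev : G =ᶠ[nhdsWithin c (Set.Ioi c)] (fun _ => (0 : ℂ)) := by
      filter_upwards [Ioo_mem_nhdsGT_of_mem ⟨le_refl c, hcm⟩] with x hx
      exact hG0 x (habs_left x hx.2)
    exact tendsto_const_nhds.congr' hev.symm
  have hFc : Tendsto F (nhdsWithin c (Set.Ioi c)) (nhds 0) := by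
    have hev : F =ᶠ[nhdsWithin c (Set.Ioi c)] (fun _ => (0 : ℂ)) := by
      filter_upwards [Ioo_mem_nhdsGT_of_mem ⟨le_refl c, hcm⟩] with x hx
      exact hF0 x (habs_left x hx.2)
    exact tendsto_const_nhds.congr' hev.symm
  have hGd : Tendsto G (nhdsWithin d (Set.Iio d)) (nhds 0) := by
    have hev : G =ᶠ[nhdsWithin d (Set.Iio d)] (fun _ => (0 : ℂ)) := by
      filter_upwards [Ioo_mem_nhdsLT_of_mem ⟨hdm, le_refl d⟩] with x hx
      exact hG0 x (habs_right x hx.1)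
    exact tendsto_const_nhds.congr' hev.symm
  have hFd : Tendsto F (nhdsWithin d (Set.Iio d)) (nhds 0) := by
    have hev : F =ᶠ[nhdsWithin d (Set.Iio d)] (fun _ => (0 : ℂ)) := by
      filter_upwards [Ioo_mem_nhdsLT_of_mem ⟨hdm, le_refl d⟩] with x hx
      exact hF0 x (habs_right x hx.1)
    exact tendsto_const_nhds.congr' hev.symm
  -- second-derivative one-sided limits
  obtain ⟨gψam, hgψam⟩ := hψ''lim a (by simp) (Set.Iio a) (by simp)
  obtain ⟨gψap, hgψap⟩ := hψ''lim a (by simp) (Set.Ioi a) (by simp)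
  obtain ⟨gψbm, hgψbm⟩ := hψ''lim b (by simp) (Set.Iio b) (by simp)
  obtain ⟨gψbp, hgψbp⟩ := hψ''lim b (by simp) (Set.Ioi b) (by simp)
  obtain ⟨gφam, hgφam⟩ := hφ''lim a (by simp) (Set.Iio a) (by simp)
  obtain ⟨gφap, hgφap⟩ := hφ''lim a (by simp) (Set.Ioi a) (by simp)
  obtain ⟨gφbm, hgφbm⟩ := hφ''lim b (by simp) (Set.Iio b) (by simp)
  obtain ⟨gφbp, hgφbp⟩ := hφ''lim b (by simp) (Set.Ioi b) (by simp)
  have hconj : ∀ {f : ℝ → ℂ} {l : Filter ℝ} {z : ℂ}, Tendsto f l (nhds z) →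
      Tendsto (fun x => star (f x)) l (nhds (star z)) :=
    fun h => (continuous_star.tendsto _).comp h
  -- one-sided limits of F and G at a and b
  have hGam : Tendsto G (nhdsWithin a (Set.Iio a)) (nhds (star gψam * φam - star ψam * gφam)) :=
    (((hconj hgψam).mul hφam).sub ((hconj hψam).mul hgφam))
  have hGap : Tendsto G (nhdsWithin a (Set.Ioi a)) (nhds (star gψap * φap - star ψap * gφap)) :=
    (((hconj hgψap).mul hφap).sub ((hconj hψap).mul hgφap))
  have hGbm : Tendsto G (nhdsWithin b (Set.Iio b)) (nhds (star gψbm * φbm - star ψbm * gφbm)) :=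
    (((hconj hgψbm).mul hφbm).sub ((hconj hψbm).mul hgφbm))
  have hGbp : Tendsto G (nhdsWithin b (Set.Ioi b)) (nhds (star gψbp * φbp - star ψbp * gφbp)) :=
    (((hconj hgψbp).mul hφbp).sub ((hconj hψbp).mul hgφbp))
  have hFam : Tendsto F (nhdsWithin a (Set.Iio a)) (nhds (star dψam * φam - star ψam * dφam)) :=
    (((hconj hdψam).mul hφam).sub ((hconj hψam).mul hdφam))
  have hFap : Tendsto F (nhdsWithin a (Set.Ioi a)) (nhds (star dψap * φap - star ψap * dφap)) :=
    (((hconj hdψap).mul hφap).sub ((hconj hψap).mul hdφap))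
  have hFbm : Tendsto F (nhdsWithin b (Set.Iio b)) (nhds (star dψbm * φbm - star ψbm * dφbm)) :=
    (((hconj hdψbm).mul hφbm).sub ((hconj hψbm).mul hdφbm))
  have hFbp : Tendsto F (nhdsWithin b (Set.Ioi b)) (nhds (star dψbp * φbp - star ψbp * dφbp)) :=
    (((hconj hdψbp).mul hφbp).sub ((hconj hψbp).mul hdφbp))
  -- interval inclusions into Ω
  have hsub1 : Set.Ioo c a ⊆ Ω := fun x hx =>
    hmemΩ x (ne_of_lt hx.2) (ne_of_lt (lt_trans hx.2 hab))
  have hsub2 : Set.Ioo a b ⊆ Ω := fun x hx =>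
    hmemΩ x (ne_of_gt hx.1) (ne_of_lt hx.2)
  have hsub3 : Set.Ioo b d ⊆ Ω := fun x hx =>
    hmemΩ x (ne_of_gt (lt_trans hab hx.1)) (ne_of_gt hx.1)
  -- the three interval integrals
  have hint1 : ∫ x in Set.Ioo c a, G x = (star dψam * φam - star ψam * dφam) - 0 :=
    aux_ftc hca (fun x hx => hFderiv x (hsub1 hx)) (hGcont.mono hsub1) hGc hGam hFc hFam
  have hint2 : ∫ x in Set.Ioo a b, G x
      = (star dψbm * φbm - star ψbm * dφbm) - (star dψap * φap - star ψap * dφap) :=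
    aux_ftc hab (fun x hx => hFderiv x (hsub2 hx)) (hGcont.mono hsub2) hGap hGbm hFap hFbm
  have hint3 : ∫ x in Set.Ioo b d, G x = 0 - (star dψbp * φbp - star ψbp * dφbp) :=
    aux_ftc hbd (fun x hx => hFderiv x (hsub3 hx)) (hGcont.mono hsub3) hGbp hGd hFbp hFd
  -- integrability on the three intervals
  have hi1 : IntegrableOn G (Set.Ioo c a) :=
    aux_integrableOn hca (hGcont.mono hsub1) hGc hGam
  have hi2 : IntegrableOn G (Set.Ioo a b) :=
    aux_integrableOn hab (hGcont.mono hsub2) hGap hGbm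
  have hi3 : IntegrableOn G (Set.Ioo b d) :=
    aux_integrableOn hbd (hGcont.mono hsub3) hGbp hGd
  -- reduce the integral over Ω to the three intervals
  have hsubS : Set.Ioo c a ∪ Set.Ioo a b ∪ Set.Ioo b d ⊆ Ω := by
    intro x hx
    rcases hx with (hx | hx) | hx
    exacts [hsub1 hx, hsub2 hx, hsub3 hx]
  have hstep1 : ∫ x in Ω, G x
      = ∫ x in Set.Ioo c a ∪ Set.Ioo a b ∪ Set.Ioo b d, G x := by
    apply setIntegral_eq_of_subset_of_forall_diff_eq_zero hΩmeas hsubS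
    intro x hx
    obtain ⟨hxΩ, hxS⟩ := hx
    have hxa : x ≠ a := by intro h; exact hxΩ (by simp [hΩdef, h])
    have hxb : x ≠ b := by intro h; exact hxΩ (by simp [hΩdef, h])
    have hout : x ≤ c ∨ d ≤ x := by
      by_contra h
      push_neg at h
      obtain ⟨h1, h2⟩ := h
      rcases lt_trichotomy x a with ha' | ha' | ha'
      · exact hxS (Or.inl (Or.inl ⟨h1, ha'⟩))
      · exact hxa ha'
      · rcases lt_trichotomy x b with hb' | hb' | hb'
        · exact hxS (Or.inl (Or.inr ⟨ha', hb'⟩))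
        · exact hxb hb'
        · exact hxS (Or.inr ⟨hb', h2⟩)
    rcases hout with h | h
    · exact hG0 x (habs_left x (lt_of_le_of_lt h hcm))
    · exact hG0 x (habs_right x (lt_of_lt_of_le hdm h))
  have hdisj1 : Disjoint (Set.Ioo c a) (Set.Ioo a b) :=
    Set.disjoint_left.mpr fun x hx hx' => absurd hx.2 (not_lt.2 hx'.1.le)
  have hdisj2 : Disjoint (Set.Ioo c a ∪ Set.Ioo a b) (Set.Ioo b d) := by
    apply Set.disjoint_left.mpr
    rintro x (hx | hx) hx'
    · exact absurd (lt_trans hx.2 hab) (not_lt.2 hx'.1.le)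
    · exact absurd hx.2 (not_lt.2 hx'.1.le)
  have hstep2 : ∫ x in Set.Ioo c a ∪ Set.Ioo a b ∪ Set.Ioo b d, G x
      = (∫ x in Set.Ioo c a, G x) + (∫ x in Set.Ioo a b, G x) + ∫ x in Set.Ioo b d, G x := by
    rw [setIntegral_union hdisj2 measurableSet_Ioo (hi1.union hi2) hi3,
      setIntegral_union hdisj1 measurableSet_Ioo hi1 hi2]
  -- put everything together
  have hLHS : (∫ x in ({a, b} : Set ℝ)ᶜ,
      ((starRingEnd ℂ) (ψ x) * (-φ'' x + (V x : ℂ) * φ x)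
        - (starRingEnd ℂ) (-ψ'' x + (V x : ℂ) * ψ x) * φ x))
      = ((star dψam * φam - star ψam * dφam) - 0)
        + ((star dψbm * φbm - star ψbm * dφbm) - (star dψap * φap - star ψap * dφap))
        + (0 - (star dψbp * φbp - star ψbp * dφbp)) := by
    simp only [hintegrand]
    rw [← hΩdef, hstep1, hstep2, hint1, hint2, hint3]
  rw [hLHS]
  simp only [dotProduct, Fin.sum_univ_four, Pi.star_apply, Pi.smul_apply,
    Matrix.cons_val_zero, Matrix.cons_val_one, Matrix.head_cons,
    Matrix.cons_val_two, Matrix.cons_val_three, Matrix.tail_cons, Matrix.head_fin_const,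
    smul_eq_mul, star_sub, star_add, star_mul', star_div₀, star_one, star_ofNat]
  ring
end

section
/- Let g : ℝ → ℂ be continuous with compact support, let f : ℝ → [0,∞) be square integrable, and let q : ℝ × ℝ → ℂ be (jointly) measurable such that for every x ∈ ℝ the map k ↦ q(k,x) is continuous and |q(k,x)| ≤ f(x) for all k, x ∈ ℝ. Then lim_{|t| → ∞} ∫_ℝ | ∫_ℝ e^{−itk²}·q(k,x)·g(k) dk |² dx = 0. -/
open MeasureTheory Filter

open Set


noncomputable section

/-- Integrability of `u ↦ (√u)⁻¹ • w u` on `(0,∞)` for `w` bounded, measurable,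
vanishing beyond `B`. -/
lemma aux_integrableOn_s17 (w : ℝ → ℂ)
    (hw : AEStronglyMeasurable w (volume.restrict (Set.Ioi 0)))
    (M B : ℝ) (hM : ∀ u, ‖w u‖ ≤ M) (hB : ∀ u, B < u → w u = 0) :
    IntegrableOn (fun u : ℝ => (Real.sqrt u)⁻¹ • w u) (Set.Ioi 0) := by
  have hM0 : 0 ≤ M := le_trans (norm_nonneg _) (hM 0)
  set d : ℝ → ℝ := Set.indicator (Set.Ioc 0 B) (fun u => (Real.sqrt u)⁻¹ * M) with hd
  have hdint : IntegrableOn d (Set.Ioi 0) := by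
    apply Integrable.integrableOn
    rw [hd, integrable_indicator_iff measurableSet_Ioc]
    rcases le_or_gt B 0 with hB0 | hB0
    · rw [Set.Ioc_eq_empty (by exact fun hcon => absurd (hcon.trans_le hB0) (lt_irrefl 0))]
      exact integrableOn_empty
    · have h1 : IntegrableOn (fun x : ℝ => x ^ (-(1/2 : ℝ))) (Set.Ioc 0 B) := by
        have := intervalIntegral.intervalIntegrable_rpow' (a := 0) (b := B)
          (r := -(1/2 : ℝ)) (by norm_num)
        rwa [intervalIntegrable_iff_integrableOn_Ioc_of_le hB0.le] at this
      have h2 : IntegrableOn (fun x : ℝ => x ^ (-(1/2 : ℝ)) * M) (Set.Ioc 0 B) :=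
        h1.mul_const M
      apply h2.congr_fun _ measurableSet_Ioc
      intro u hu
      show u ^ (-(1/2:ℝ)) * M = (Real.sqrt u)⁻¹ * M
      rw [Real.rpow_neg hu.1.le, Real.sqrt_eq_rpow u]
  apply Integrable.mono' hdint
  · exact ((Real.continuous_sqrt.measurable.inv).aemeasurable.restrict.aestronglyMeasurable).smul hw
  · rw [ae_restrict_iff' measurableSet_Ioi]
    filter_upwards with u
    intro hu
    have hsq : (0:ℝ) ≤ (Real.sqrt u)⁻¹ := inv_nonneg.2 (Real.sqrt_nonneg u)
    rw [norm_smul, Real.norm_eq_abs, abs_of_nonneg hsq]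
    rcases le_or_gt u B with hub | hub
    · rw [hd, Set.indicator_of_mem (Set.mem_Ioc.2 ⟨hu, hub⟩)]
      exact mul_le_mul_of_nonneg_left (hM u) hsq
    · rw [hB u hub, hd, Set.indicator_of_notMem (fun hcon => absurd hcon.2 (not_le.2 hub))]
      simp

def psiAux (h : ℝ → ℂ) : ℝ → ℂ :=
  Set.indicator (Set.Ioi 0)
    (fun u => ((2 * Real.sqrt u)⁻¹ : ℝ) • (h (Real.sqrt u) + h (-Real.sqrt u)))

lemma sq_image_Ioi : (fun k : ℝ => k ^ 2) '' (Set.Ioi 0) = Set.Ioi 0 := by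
  ext u
  constructor
  · rintro ⟨k, hk, rfl⟩; exact pow_pos (show (0:ℝ) < k from hk) 2
  · intro hu; exact ⟨Real.sqrt u, Real.sqrt_pos.2 hu, Real.sq_sqrt hu.le⟩

lemma sq_image_Iio : (fun k : ℝ => k ^ 2) '' (Set.Iio 0) = Set.Ioi 0 := by
  ext u
  constructor
  · rintro ⟨k, hk, rfl⟩
    have hkne : k ≠ 0 := ne_of_lt hk
    simp only [Set.mem_Ioi]
    positivity
  · intro hu
    refine ⟨-Real.sqrt u, ?_, ?_⟩
    · simpa using Real.sqrt_pos.2 hu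
    · simpa [neg_pow] using Real.sq_sqrt hu.le

lemma sq_injOn_Ioi : Set.InjOn (fun k : ℝ => k ^ 2) (Set.Ioi 0) := fun a ha b hb hab => by
  simpa [Real.sqrt_sq (le_of_lt ha), Real.sqrt_sq (le_of_lt hb)] using
    congrArg Real.sqrt hab

lemma sq_injOn_Iio : Set.InjOn (fun k : ℝ => k ^ 2) (Set.Iio 0) := fun a ha b hb hab => by
  have h2 := congrArg Real.sqrt hab
  rw [Real.sqrt_sq_eq_abs, Real.sqrt_sq_eq_abs, abs_of_neg ha, abs_of_neg hb] at h2
  linarith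

lemma hasDeriv_sq (s : Set ℝ) : ∀ k ∈ s, HasDerivWithinAt (fun k : ℝ => k ^ 2) (2 * k) s k :=
  fun k _ => by simpa using (hasDerivAt_pow 2 k).hasDerivWithinAt

lemma key_identity_s17 (h : ℝ → ℂ) (hc : Continuous h) (hs : HasCompactSupport h)
    (M : ℝ) (hM : ∀ x, ‖h x‖ ≤ M) (R : ℝ)
    (hvan : ∀ x : ℝ, R < |x| → h x = 0) (hR0 : 0 ≤ R) (t : ℝ) :
    ∫ u : ℝ, Complex.exp (-(Complex.I * t * u)) * psiAux h u
      = ∫ k : ℝ, Complex.exp (-(Complex.I * t * (k : ℂ) ^ 2)) * h k := by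
  set E : ℝ → ℂ := fun u => Complex.exp (-(Complex.I * t * u)) with hE
  have hEcont : Continuous E := by
    rw [hE]
    exact Complex.continuous_exp.comp (by continuity)
  have hEnorm : ∀ u : ℝ, ‖E u‖ = 1 := by
    intro u
    rw [hE]
    simp [Complex.norm_exp]
  -- integrability of the two half pieces
  have hbound : ∀ (c : ℝ) (u : ℝ), ‖E u * h (c * Real.sqrt u)‖ ≤ M := by
    intro c u
    rw [norm_mul, hEnorm, one_mul]
    exact hM _
  have hvan' : ∀ (c : ℝ), |c| = 1 → ∀ u : ℝ, R ^ 2 < u → E u * h (c * Real.sqrt u) = 0 := by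
    intro c hc1 u hu
    have h1 : R < Real.sqrt u := (Real.lt_sqrt hR0).2 hu
    have : h (c * Real.sqrt u) = 0 := by
      apply hvan
      rw [abs_mul, hc1, one_mul, abs_of_nonneg (Real.sqrt_nonneg u)]
      exact h1
    rw [this, mul_zero]
  have hIp : IntegrableOn (fun u : ℝ => (Real.sqrt u)⁻¹ • (E u * h (Real.sqrt u)))
      (Set.Ioi 0) := by
    refine aux_integrableOn_s17 _ ?_ M (R ^ 2) ?_ ?_
    · exact (hEcont.mul (hc.comp Real.continuous_sqrt)).aestronglyMeasurable.restrict
    · intro u; simpa using hbound 1 u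
    · intro u hu; simpa using hvan' 1 (by norm_num) u hu
  have hIm : IntegrableOn (fun u : ℝ => (Real.sqrt u)⁻¹ • (E u * h (-Real.sqrt u)))
      (Set.Ioi 0) := by
    refine aux_integrableOn_s17 _ ?_ M (R ^ 2) ?_ ?_
    · exact (hEcont.mul (hc.comp Real.continuous_sqrt.neg)).aestronglyMeasurable.restrict
    · intro u; simpa using hbound (-1) u
    · intro u hu; simpa using hvan' (-1) (by norm_num) u hu
  have hint : Integrable (fun k : ℝ => E (k ^ 2) * h k) := by
    apply Continuous.integrable_of_hasCompactSupport
    · exact (hEcont.comp (continuous_pow 2)).mul hc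
    · exact hs.mul_left
  have step1 : (fun u : ℝ => E u * psiAux h u)
      = Set.indicator (Set.Ioi 0)
        (fun u => (2⁻¹ : ℝ) • ((Real.sqrt u)⁻¹ • (E u * h (Real.sqrt u))
          + (Real.sqrt u)⁻¹ • (E u * h (-Real.sqrt u)))) := by
    funext u
    by_cases hu : u ∈ Set.Ioi (0:ℝ)
    · rw [psiAux, Set.indicator_of_mem hu, Set.indicator_of_mem hu, mul_inv,
        mul_smul_comm, mul_smul, mul_add, smul_add]
    · rw [psiAux, Set.indicator_of_notMem hu, Set.indicator_of_notMem hu, mul_zero]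
  have covP : ∫ u in Set.Ioi (0:ℝ), (Real.sqrt u)⁻¹ • (E u * h (Real.sqrt u))
      = (2:ℝ) • ∫ k in Set.Ioi (0:ℝ), E (k ^ 2) * h k := by
    conv_lhs => rw [← sq_image_Ioi]
    rw [integral_image_eq_integral_abs_deriv_smul measurableSet_Ioi (hasDeriv_sq _)
      sq_injOn_Ioi, ← integral_smul]
    apply setIntegral_congr_fun measurableSet_Ioi
    intro k hk
    have hk0 : (0:ℝ) < k := hk
    show |2 * k| • (Real.sqrt (k ^ 2))⁻¹ • (E (k ^ 2) * h (Real.sqrt (k ^ 2)))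
      = (2:ℝ) • (E (k ^ 2) * h k)
    rw [Real.sqrt_sq hk0.le, abs_of_pos (by positivity), smul_smul,
      mul_inv_cancel_right₀ hk0.ne']
  have covM : ∫ u in Set.Ioi (0:ℝ), (Real.sqrt u)⁻¹ • (E u * h (-Real.sqrt u))
      = (2:ℝ) • ∫ k in Set.Iio (0:ℝ), E (k ^ 2) * h k := by
    conv_lhs => rw [← sq_image_Iio]
    rw [integral_image_eq_integral_abs_deriv_smul measurableSet_Iio (hasDeriv_sq _)
      sq_injOn_Iio, ← integral_smul]
    apply setIntegral_congr_fun measurableSet_Iio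
    intro k hk
    have hk0 : k < (0:ℝ) := hk
    show |2 * k| • (Real.sqrt (k ^ 2))⁻¹ • (E (k ^ 2) * h (-Real.sqrt (k ^ 2)))
      = (2:ℝ) • (E (k ^ 2) * h k)
    rw [Real.sqrt_sq_eq_abs, abs_of_neg hk0, neg_neg, abs_of_neg (by linarith : 2 * k < 0),
      smul_smul]
    have hkne : k ≠ 0 := ne_of_lt hk0
    congr 1
    field_simp
  calc ∫ u : ℝ, E u * psiAux h u
      = ∫ u in Set.Ioi (0:ℝ), (2⁻¹ : ℝ) • ((Real.sqrt u)⁻¹ • (E u * h (Real.sqrt u))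
          + (Real.sqrt u)⁻¹ • (E u * h (-Real.sqrt u))) := by
        rw [step1, integral_indicator measurableSet_Ioi]
    _ = (2⁻¹ : ℝ) • ((∫ u in Set.Ioi (0:ℝ), (Real.sqrt u)⁻¹ • (E u * h (Real.sqrt u)))
          + ∫ u in Set.Ioi (0:ℝ), (Real.sqrt u)⁻¹ • (E u * h (-Real.sqrt u))) := by
        rw [integral_smul, integral_add hIp hIm]
    _ = (∫ k in Set.Ioi (0:ℝ), E (k ^ 2) * h k) + ∫ k in Set.Iio (0:ℝ), E (k ^ 2) * h k := by
        rw [covP, covM, smul_add, smul_smul, smul_smul]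
        norm_num
    _ = ∫ k : ℝ, E (k ^ 2) * h k := by
        rw [add_comm, setIntegral_congr_set Iio_ae_eq_Iic]
        exact intervalIntegral.integral_Iic_add_Ioi hint.integrableOn hint.integrableOn
    _ = ∫ k : ℝ, Complex.exp (-(Complex.I * t * (k : ℂ) ^ 2)) * h k := by
        simp only [hE, Complex.ofReal_pow]

lemma osc_decay (h : ℝ → ℂ) (hc : Continuous h) (hs : HasCompactSupport h) :
    Tendsto (fun t : ℝ => ∫ k : ℝ, Complex.exp (-(Complex.I * t * (k : ℂ) ^ 2)) * h k)
      (atBot ⊔ atTop) (nhds 0) := by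
  obtain ⟨M, hM⟩ := hs.exists_bound_of_continuous hc
  obtain ⟨R0, hR0⟩ := hs.isBounded.subset_closedBall 0
  set R := max R0 0 with hR
  have hRnn : (0:ℝ) ≤ R := le_max_right _ _
  have hvan : ∀ x : ℝ, R < |x| → h x = 0 := by
    intro x hx
    apply image_eq_zero_of_notMem_tsupport
    intro hmem
    have h1 := hR0 hmem
    rw [Metric.mem_closedBall, Real.dist_eq, sub_zero] at h1
    have h2 : |x| ≤ R := h1.trans (le_max_left _ _)
    linarith
  have hvan2 : ∀ u : ℝ, R ^ 2 < u → h (Real.sqrt u) + h (-Real.sqrt u) = 0 := by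
    intro u hu
    have h1 : R < Real.sqrt u := (Real.lt_sqrt hRnn).2 hu
    rw [hvan (Real.sqrt u) (by rwa [abs_of_nonneg (Real.sqrt_nonneg u)]),
      hvan (-Real.sqrt u) (by rwa [abs_neg, abs_of_nonneg (Real.sqrt_nonneg u)]), add_zero]
  have ψint : Integrable (psiAux h) := by
    rw [psiAux, integrable_indicator_iff measurableSet_Ioi]
    have base := aux_integrableOn_s17 (fun u => h (Real.sqrt u) + h (-Real.sqrt u))
      (((hc.comp Real.continuous_sqrt).add (hc.comp Real.continuous_sqrt.neg)).aestronglyMeasurable.restrict)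
      (M + M) (R ^ 2)
      (fun u => (norm_add_le _ _).trans (add_le_add (hM _) (hM _)))
      hvan2
    apply IntegrableOn.congr_fun (base.smul (2⁻¹ : ℝ)) _ measurableSet_Ioi
    intro u _
    show (2⁻¹ : ℝ) • ((Real.sqrt u)⁻¹ • (h (Real.sqrt u) + h (-Real.sqrt u)))
      = ((2 * Real.sqrt u)⁻¹ : ℝ) • (h (Real.sqrt u) + h (-Real.sqrt u))
    rw [smul_smul, mul_inv]
  have RL := Real.tendsto_integral_exp_smul_cocompact (psiAux h)
  have h2pi : (0:ℝ) < 2 * Real.pi := by positivity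
  have comp : Tendsto (fun t : ℝ => t / (2 * Real.pi)) (atBot ⊔ atTop) (cocompact ℝ) := by
    rw [cocompact_eq_atBot_atTop, tendsto_sup]
    constructor
    · exact (tendsto_id.atBot_div_const h2pi).mono_right le_sup_left
    · exact (tendsto_id.atTop_div_const h2pi).mono_right le_sup_right
  have main := RL.comp comp
  apply main.congr
  intro t
  show (∫ v : ℝ, Real.fourierChar (-(v * (t / (2 * Real.pi)))) • psiAux h v)
      = ∫ k : ℝ, Complex.exp (-(Complex.I * t * (k : ℂ) ^ 2)) * h k
  rw [← key_identity_s17 h hc hs M hM R hvan hRnn t]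
  congr 1
  funext v
  rw [Circle.smul_def, Real.fourierChar_apply]
  congr 1
  have harg : 2 * Real.pi * -(v * (t / (2 * Real.pi))) = -(v * t) := by
    field_simp
  rw [harg]
  push_cast
  ring

/-- Oscillatory-integral decay: if `g` is continuous with
compact support, `f ≥ 0` is square integrable and `q` is a jointly measurable
kernel, continuous in `k` and dominated by `f(x)`, then
`∫_ℝ |∫_ℝ e^{−itk²} q(k,x) g(k) dk|² dx → 0` as `t → ±∞`. -/
theorem statement17
    (g : ℝ → ℂ) (hgc : Continuous g) (hgsupp : HasCompactSupport g)
    (f : ℝ → ℝ) (hf0 : ∀ x, 0 ≤ f x) (hf : MemLp f 2 (volume : Measure ℝ))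
    (q : ℝ × ℝ → ℂ) (hqm : Measurable q)
    (hqc : ∀ x : ℝ, Continuous fun k => q (k, x))
    (hqb : ∀ k x : ℝ, ‖q (k, x)‖ ≤ f x) :
    Tendsto
      (fun t : ℝ => ∫ x : ℝ,
        ‖∫ k : ℝ, Complex.exp (-(Complex.I * t * k ^ 2)) * q (k, x) * g k‖ ^ 2)
      (atBot ⊔ atTop) (nhds 0) := by
  set C : ℝ := ∫ k : ℝ, ‖g k‖ with hC
  have hC0 : 0 ≤ C := integral_nonneg fun k => norm_nonneg _
  have hgint : Integrable g := hgc.integrable_of_hasCompactSupport hgsupp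
  have hbound_int : Integrable (fun x : ℝ => (f x * C) ^ 2) := by
    have h2 : Integrable (fun x : ℝ => f x ^ 2 * C ^ 2) := hf.integrable_sq.mul_const _
    exact h2.congr (by filter_upwards with x; rw [mul_pow])
  have hbound : ∀ (t : ℝ) (x : ℝ),
      ‖∫ k : ℝ, Complex.exp (-(Complex.I * t * k ^ 2)) * q (k, x) * g k‖
        ≤ f x * C := by
    intro t x
    calc ‖∫ k : ℝ, Complex.exp (-(Complex.I * t * k ^ 2)) * q (k, x) * g k‖
        ≤ ∫ k : ℝ, ‖Complex.exp (-(Complex.I * t * k ^ 2)) * q (k, x) * g k‖ :=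
          norm_integral_le_integral_norm _
      _ ≤ ∫ k : ℝ, f x * ‖g k‖ := by
          apply integral_mono_of_nonneg
          · filter_upwards with k; positivity
          · exact hgint.norm.const_mul _
          · filter_upwards with k
            rw [norm_mul, norm_mul]
            have h1 : ‖Complex.exp (-(Complex.I * t * (k:ℂ) ^ 2))‖ = 1 := by
              have harg : -(Complex.I * t * (k:ℂ) ^ 2) = (↑(-(t * k ^ 2)) : ℂ) * Complex.I := by
                push_cast; ring
              rw [harg, Complex.norm_exp_ofReal_mul_I]
            rw [h1, one_mul]
            exact mul_le_mul_of_nonneg_right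
              (hqb k x) (norm_nonneg _)
      _ = f x * C := integral_const_mul _ _
  haveI : (atBot ⊔ atTop : Filter ℝ).NeBot := sup_neBot.2 (Or.inl atBot_neBot)
  have htendsto := tendsto_integral_filter_of_dominated_convergence
    (μ := (volume : Measure ℝ)) (l := (atBot ⊔ atTop : Filter ℝ))
    (F := fun t x =>
      ‖∫ k : ℝ, Complex.exp (-(Complex.I * t * k ^ 2)) * q (k, x) * g k‖ ^ 2)
    (f := fun _ : ℝ => (0:ℝ))
    (fun x => (f x * C) ^ 2)
    ?_ ?_ hbound_int ?_
  · simpa using htendsto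
  · -- measurability
    filter_upwards with t
    have ce : Continuous (fun p : ℝ × ℝ => Complex.exp (-(Complex.I * t * (p.2 : ℂ) ^ 2))) :=
      Complex.continuous_exp.comp (by continuity)
    have m0 : StronglyMeasurable
        (fun p : ℝ × ℝ => Complex.exp (-(Complex.I * t * (p.2 : ℂ) ^ 2)) * q (p.2, p.1) * g p.2) :=
      (((ce.measurable.mul (hqm.comp (measurable_snd.prodMk measurable_fst))).mul
        (hgc.measurable.comp measurable_snd))).stronglyMeasurable
    have m1 := MeasureTheory.StronglyMeasurable.integral_prod_right' (ν := (volume : Measure ℝ)) m0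
    exact ((continuous_norm.pow 2).comp_aestronglyMeasurable m1.aestronglyMeasurable)
  · filter_upwards with t
    filter_upwards with x
    rw [Real.norm_eq_abs, abs_of_nonneg (by positivity)]
    exact pow_le_pow_left₀ (norm_nonneg _) (hbound t x) 2
  · filter_upwards with x
    have h1 := osc_decay (fun k => q (k, x) * g k) ((hqc x).mul hgc) hgsupp.mul_left
    have h2 : Tendsto
        (fun t : ℝ => ∫ k : ℝ, Complex.exp (-(Complex.I * t * k ^ 2)) * q (k, x) * g k)
        (atBot ⊔ atTop) (nhds 0) := by
      refine h1.congr fun t => ?_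
      congr 1
      funext k
      ring
    have h3 : Tendsto
        (fun t : ℝ =>
          ‖∫ k : ℝ, Complex.exp (-(Complex.I * t * k ^ 2)) * q (k, x) * g k‖)
        (atBot ⊔ atTop) (nhds 0) := by
      simpa [Function.comp_def] using (continuous_norm.tendsto (0:ℂ)).comp h2
    simpa using h3.pow 2
end
end
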